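/- arXiv:1311.2881 — 15 statements merged into one kernel-verified Lean document; each statement's English description precedes it below -/
import Mathlib

section
/- Every finite-dimensional simple K G-module has dimension at most 2. -/
open Module

section Aux

variable {K : Type*} [Field K] {G : Type*} [Group G]
variable {V : Type*} [AddCommGroup V] [Module K V]
  [Module (MonoidAlgebra K G) V] [IsScalarTower K (MonoidAlgebra K G) V]

/-- The action of a group element as a `K`-linear endomorphism. -/
noncomputable def gAct (a : G) : V →ₗ[K] V where
  toFun v := (MonoidAlgebra.of K G a) • v
  map_add' := smul_add _
  map_smul' k v := by
    simp only [RingHom.id_apply]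
    exact smul_comm _ k v

lemma gAct_apply (a : G) (v : V) : gAct (K := K) (V := V) a v = (MonoidAlgebra.of K G a) • v := rfl

lemma gAct_mul (a b : G) (v : V) :
    gAct (K := K) (V := V) (a * b) v = gAct (K := K) a (gAct (K := K) (V := V) b v) := by
  simp only [gAct_apply, map_mul, mul_smul]

lemma gAct_one (v : V) : gAct (K := K) (V := V) (1 : G) v = v := by
  rw [gAct_apply, map_one, one_smul]

/-- A central group element commutes with the whole monoid algebra. -/
lemma of_central {u : G} (hu : ∀ a : G, u * a = a * u) (r : MonoidAlgebra K G) :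
    MonoidAlgebra.of K G u * r = r * MonoidAlgebra.of K G u := by
  induction r using MonoidAlgebra.induction_on with
  | of a => rw [← map_mul, ← map_mul, hu]
  | add f g hf hg => rw [mul_add, add_mul, hf, hg]
  | smul k f hf => rw [mul_smul_comm, smul_mul_assoc, hf]

/-- Schur: a central group element acts by a scalar on a finite-dimensional simple module. -/
lemma central_scalar [IsAlgClosed K] [FiniteDimensional K V]
    [IsSimpleModule (MonoidAlgebra K G) V]
    {u : G} (hu : ∀ a : G, u * a = a * u) :
    ∃ c : K, ∀ x : V, (MonoidAlgebra.of K G u) • x = c • x := by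
  have : Nontrivial V := IsSimpleModule.nontrivial (MonoidAlgebra K G) V
  obtain ⟨c, hc⟩ := Module.End.exists_eigenvalue (gAct (K := K) (V := V) u)
  obtain ⟨v0, hv0⟩ := hc.exists_hasEigenvector
  refine ⟨c, ?_⟩
  set E : Submodule (MonoidAlgebra K G) V :=
    { carrier := {x | (MonoidAlgebra.of K G u) • x = c • x}
      add_mem' := by
        intro x y hx hy
        simp only [Set.mem_setOf_eq] at *
        rw [smul_add, smul_add, hx, hy]
      zero_mem' := by simp
      smul_mem' := by
        intro r x hx
        simp only [Set.mem_setOf_eq] at *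
        rw [smul_smul, of_central hu, ← smul_smul, hx, smul_comm] } with hE
  have hne : E ≠ ⊥ := by
    intro h
    have hmem : v0 ∈ E := hv0.apply_eq_smul
    rw [h, Submodule.mem_bot] at hmem
    exact hv0.2 hmem
  have htop : E = ⊤ := (eq_bot_or_eq_top E).resolve_left hne
  intro x
  have hx : x ∈ E := htop ▸ Submodule.mem_top
  exact hx

end Aux

/-- Let `K` be an algebraically closed field and `G` a non-abelian epimorphic image of the
group `Γ₃`, via `γ ↦ g`, `ν ↦ ε`, `ζ ↦ z`.  Then every finite-dimensional simple
`K G`-module has `K`-dimension at most `2`. -/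
theorem dim_le_two_of_simple
    {K : Type*} [Field K] [IsAlgClosed K] {G : Type*} [Group G]
    (g ε z : G) (hε : ε ≠ 1)
    (hgen : Subgroup.closure {g, ε, z} = ⊤)
    (hrel1 : g * ε * g⁻¹ = ε ^ 2) (hrel2 : ε ^ 3 = 1)
    (hrel3 : z * g = g * z) (hrel4 : z * ε = ε * z)
    (V : Type*) [AddCommGroup V] [Module K V]
    [Module (MonoidAlgebra K G) V] [IsScalarTower K (MonoidAlgebra K G) V]
    [FiniteDimensional K V] [IsSimpleModule (MonoidAlgebra K G) V] :
    Module.finrank K V ≤ 2 := by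
  have hnt : Nontrivial V := IsSimpleModule.nontrivial (MonoidAlgebra K G) V
  -- basic group identities
  have hge : g * ε = ε ^ 2 * g := by
    rw [← hrel1]; group
  have hε4 : ε ^ 4 = ε := by
    rw [show (4:ℕ) = 3 + 1 by norm_num, pow_add, hrel2, one_mul, pow_one]
  have hgε2 : g * ε ^ 2 = ε * g := by
    have h1 : g * ε ^ 2 = ε ^ 4 * g := by
      rw [pow_two, ← mul_assoc, hge, mul_assoc, hge, ← mul_assoc, ← pow_add]
    rw [h1, hε4]
  have hεg : ε * g = g * ε ^ 2 := hgε2.symm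
  have hε2g : ε ^ 2 * g = g * ε := hge.symm
  -- z is central
  have hz : ∀ a : G, z * a = a * z := by
    intro a
    have ha : a ∈ Subgroup.closure ({g, ε, z} : Set G) := hgen ▸ Subgroup.mem_top a
    induction ha using Subgroup.closure_induction with
    | mem x hx =>
      rcases hx with h | h | h
      · rw [h]; exact hrel3
      · rw [h]; exact hrel4
      · rw [h]
    | one => simp
    | mul x y hx hy ihx ihy => rw [← mul_assoc, ihx, mul_assoc, ihy, mul_assoc]
    | inv x hx ihx =>
      calc z * x⁻¹ = x⁻¹ * (x * z) * x⁻¹ := by group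
        _ = x⁻¹ * (z * x) * x⁻¹ := by rw [ihx]
        _ = x⁻¹ * z := by group
  -- g * g is central
  have hg2 : ∀ a : G, (g * g) * a = a * (g * g) := by
    intro a
    have ha : a ∈ Subgroup.closure ({g, ε, z} : Set G) := hgen ▸ Subgroup.mem_top a
    induction ha using Subgroup.closure_induction with
    | mem x hx =>
      rcases hx with h | h | h
      · rw [h]; group
      · rw [h]
        calc g * g * ε = g * (g * ε) := by rw [mul_assoc]
          _ = g * (ε ^ 2 * g) := by rw [hge]
          _ = (g * ε ^ 2) * g := by rw [← mul_assoc]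
          _ = ε * g * g := by rw [hgε2]
          _ = ε * (g * g) := by rw [mul_assoc]
      · rw [h, mul_assoc, ← hrel3, ← mul_assoc, ← hrel3, mul_assoc]
    | one => simp
    | mul x y hx hy ihx ihy => rw [← mul_assoc, ihx, mul_assoc, ihy, mul_assoc]
    | inv x hx ihx =>
      calc (g*g) * x⁻¹ = x⁻¹ * (x * (g*g)) * x⁻¹ := by group
        _ = x⁻¹ * ((g*g) * x) * x⁻¹ := by rw [ihx]
        _ = x⁻¹ * (g*g) := by group
  -- scalars for central elements
  obtain ⟨cz, hcz⟩ := central_scalar (K := K) (V := V) hz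
  obtain ⟨cg, hcg⟩ := central_scalar (K := K) (V := V) hg2
  -- scalar inverses
  have hscalar_inv : ∀ (u : G) (c : K), (∀ x : V, (MonoidAlgebra.of K G u) • x = c • x) →
      ∀ x : V, (MonoidAlgebra.of K G u⁻¹) • x = c⁻¹ • x := by
    intro u c hc x
    have hcne : c ≠ 0 := by
      intro h
      obtain ⟨y, hy⟩ := exists_ne (0 : V)
      have hyy : (MonoidAlgebra.of K G u⁻¹) • ((MonoidAlgebra.of K G u) • y) = y := by
        rw [← mul_smul, ← map_mul, inv_mul_cancel, map_one, one_smul]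
      rw [hc, h, zero_smul, smul_zero] at hyy
      exact hy hyy.symm
    have h1 : (MonoidAlgebra.of K G u⁻¹) • ((MonoidAlgebra.of K G u) • x) = x := by
      rw [← mul_smul, ← map_mul, inv_mul_cancel, map_one, one_smul]
    rw [hc, smul_comm] at h1
    have h2 := congrArg (fun y => c⁻¹ • y) h1
    simpa [smul_smul, inv_mul_cancel₀ hcne] using h2
  -- eigenvector of ε
  obtain ⟨μ, hμ⟩ := Module.End.exists_eigenvalue (gAct (K := K) (V := V) ε)
  obtain ⟨v, hv⟩ := hμ.exists_hasEigenvector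
  have hvε : gAct (K := K) (V := V) ε v = μ • v := hv.apply_eq_smul
  have hvne : v ≠ 0 := hv.2
  -- the candidate ≤ 2-dimensional submodule
  set S : Set V := {v, gAct (K := K) (V := V) g v} with hS
  set W : Submodule K V := Submodule.span K S with hW
  have hvW : v ∈ W := Submodule.subset_span (Or.inl rfl)
  have hgvW : gAct (K := K) (V := V) g v ∈ W := Submodule.subset_span (Or.inr rfl)
  -- to show gAct a maps W into W, enough to check on the two generators
  have hcheck : ∀ a : G, gAct (K := K) (V := V) a v ∈ W → gAct (K := K) (V := V) a (gAct (K := K) (V := V) g v) ∈ W →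
      ∀ x ∈ W, gAct (K := K) (V := V) a x ∈ W := by
    intro a h1 h2 x hx
    have hle : W ≤ W.comap (gAct (K := K) (V := V) a) := by
      rw [hW]
      apply Submodule.span_le.mpr
      intro y hy
      rcases hy with h | h
      · rw [h]; exact h1
      · rw [h]; exact h2
    exact hle hx
  -- stability of W under all group elements
  have hstab : ∀ a : G, ∀ x ∈ W, gAct (K := K) (V := V) a x ∈ W := by
    have key : ∀ a : G, a ∈ Subgroup.closure ({g, ε, z} : Set G) →
        (∀ x ∈ W, gAct (K := K) (V := V) a x ∈ W) ∧ (∀ x ∈ W, gAct (K := K) (V := V) a⁻¹ x ∈ W) := by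
      intro a ha
      induction ha using Subgroup.closure_induction with
      | mem x hx =>
        rcases hx with h | h | h
        · rw [h]
          constructor
          · refine hcheck _ hgvW ?_
            rw [← gAct_mul, gAct_apply, hcg]
            exact W.smul_mem _ hvW
          · refine hcheck _ ?_ ?_
            · have hxinv : g⁻¹ = (g*g)⁻¹ * g := by group
              rw [hxinv, gAct_mul, gAct_apply, hscalar_inv _ _ hcg]
              exact W.smul_mem _ hgvW
            · rw [← gAct_mul, inv_mul_cancel, gAct_one]
              exact hvW
        · rw [h]
          have hε2 : ε⁻¹ = ε ^ 2 := by
            rw [eq_comm, eq_inv_iff_mul_eq_one, ← pow_succ]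
            exact hrel2
          constructor
          · refine hcheck _ ?_ ?_
            · rw [hvε]; exact W.smul_mem _ hvW
            · rw [← gAct_mul, hεg, pow_two, ← mul_assoc, gAct_mul, hvε, map_smul,
                gAct_mul, hvε, map_smul]
              exact W.smul_mem _ (W.smul_mem _ hgvW)
          · refine hcheck _ ?_ ?_
            · rw [hε2, pow_two, gAct_mul, hvε, map_smul, hvε]
              exact W.smul_mem _ (W.smul_mem _ hvW)
            · rw [← gAct_mul, hε2, hε2g, gAct_mul, hvε, map_smul]
              exact W.smul_mem _ hgvW
        · rw [h]
          constructor
          · intro y hy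
            rw [gAct_apply, hcz]
            exact W.smul_mem _ hy
          · intro y hy
            rw [gAct_apply, hscalar_inv _ _ hcz]
            exact W.smul_mem _ hy
      | one =>
        constructor
        · intro y hy; rw [gAct_one]; exact hy
        · intro y hy; rw [inv_one, gAct_one]; exact hy
      | mul x y hx hy ihx ihy =>
        constructor
        · intro w hw
          rw [gAct_mul]
          exact ihx.1 _ (ihy.1 _ hw)
        · intro w hw
          rw [mul_inv_rev, gAct_mul]
          exact ihy.2 _ (ihx.2 _ hw)
      | inv x hx ihx =>
        refine ⟨ihx.2, ?_⟩
        rw [inv_inv]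
        exact ihx.1
    intro a
    exact (key a (hgen ▸ Subgroup.mem_top a)).1
  -- W is a submodule over the monoid algebra
  set W' : Submodule (MonoidAlgebra K G) V :=
    { carrier := (W : Set V)
      add_mem' := fun hx hy => W.add_mem hx hy
      zero_mem' := W.zero_mem
      smul_mem' := by
        intro r x hx
        induction r using MonoidAlgebra.induction_on with
        | of a => exact hstab a x hx
        | add f g hf hg =>
          rw [add_smul]
          exact W.add_mem hf hg
        | smul k f hf =>
          rw [smul_assoc]
          exact W.smul_mem k hf } with hW'
  have hne : W' ≠ ⊥ := by
    intro h
    have hv' : v ∈ W' := hvW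
    rw [h, Submodule.mem_bot] at hv'
    exact hvne hv'
  have htop : W' = ⊤ := (eq_bot_or_eq_top W').resolve_left hne
  have hWtop : W = ⊤ := by
    rw [eq_top_iff]
    intro x _
    have hx : x ∈ W' := htop ▸ Submodule.mem_top
    exact hx
  classical
  have hfinS : S.Finite := (Set.finite_singleton _).insert _
  haveI := hfinS.fintype
  have hle2 : Module.finrank K ↥W ≤ 2 := by
    refine (finrank_span_le_card (R := K) S).trans ?_
    refine le_trans (Finset.card_le_card (?_ : S.toFinset ⊆ ({v, gAct (K := K) (V := V) g v} : Finset V))) ?_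
    · intro x hx
      rw [Set.mem_toFinset] at hx
      simp only [Finset.mem_insert, Finset.mem_singleton]
      simpa [hS] using hx
    · exact (Finset.card_insert_le _ _).trans (by simp)
  have h4 : Module.finrank K ↥W = Module.finrank K V := by
    have h5 := congrArg (fun p : Submodule K V => Module.finrank K ↥p) hWtop
    simpa [finrank_top] using h5
  exact h4 ▸ hle2
end

section
/- If V is a 2-dimensional simple K G-module, then the characteristic of K is not 3 and (1 + ε + ε²) acts as zero on V, i.e. x + ε·x + ε²·x = 0 for every x ∈ V. -/
/-- Let `K` be an algebraically closed field and `G` a non-abelian epimorphic image of the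
group `Γ₃`, via `γ ↦ g`, `ν ↦ ε`, `ζ ↦ z`.  If `V` is a 2-dimensional simple `K G`-module,
then `char K ≠ 3` and `1 + ε + ε²` acts as zero on `V`. -/
theorem char_ne_three_and_eps_sum_zero_of_simple_dim_two
    {K : Type*} [Field K] [IsAlgClosed K] {G : Type*} [Group G]
    (g ε z : G) (hε : ε ≠ 1)
    (hgen : Subgroup.closure {g, ε, z} = ⊤)
    (hrel1 : g * ε * g⁻¹ = ε ^ 2) (hrel2 : ε ^ 3 = 1)
    (hrel3 : z * g = g * z) (hrel4 : z * ε = ε * z)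
    (V : Type*) [AddCommGroup V] [Module K V]
    [Module (MonoidAlgebra K G) V] [IsScalarTower K (MonoidAlgebra K G) V]
    [IsSimpleModule (MonoidAlgebra K G) V]
    (hdim : Module.finrank K V = 2) :
    ringChar K ≠ 3 ∧
      ∀ x : V, x + MonoidAlgebra.of K G ε • x + MonoidAlgebra.of K G (ε ^ 2) • x = 0 := by
  classical
  haveI hfd : FiniteDimensional K V := .of_finrank_eq_succ hdim
  haveI : Nontrivial V := Module.nontrivial_of_finrank_pos (by rw [hdim]; norm_num)
  haveI : SMulCommClass K (MonoidAlgebra K G) V := IsScalarTower.to_smulCommClass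
  haveI : SMulCommClass (MonoidAlgebra K G) K V := SMulCommClass.symm _ _ _
  -- basic rewriting lemma for iterated scalars
  have hoo : ∀ (a b : G) (x : V),
      MonoidAlgebra.of K G a • (MonoidAlgebra.of K G b • x)
        = MonoidAlgebra.of K G (a * b) • x := by
    intro a b x; rw [map_mul, mul_smul]
  have hone : ∀ x : V, MonoidAlgebra.of K G (1 : G) • x = x := by
    intro x; rw [map_one, one_smul]
  -- the action of each group element as a K-linear endomorphism
  let L : G → Module.End K V := fun h =>
    { toFun := fun x => MonoidAlgebra.of K G h • x
      map_add' := fun x y => smul_add _ x y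
      map_smul' := fun c x => smul_comm _ c x }
  have hL : ∀ (h : G) (x : V), L h x = MonoidAlgebra.of K G h • x := fun _ _ => rfl
  -- a K-subspace stable under the generators is a MonoidAlgebra-submodule, hence ⊥ or ⊤
  have stab : ∀ W : Submodule K V,
      (∀ x ∈ W, L g x ∈ W) → (∀ x ∈ W, L ε x ∈ W) → (∀ x ∈ W, L z x ∈ W) →
      W = ⊥ ∨ W = ⊤ := by
    intro W hWg hWε hWz
    have hinv : ∀ h : G, (∀ x ∈ W, L h x ∈ W) → ∀ x ∈ W, L h⁻¹ x ∈ W := by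
      intro h hh x hx
      have hinj : Function.Injective (L h) := by
        intro a b hab
        have h2 : L h⁻¹ (L h a) = L h⁻¹ (L h b) := by rw [hab]
        simp only [hL, hoo, inv_mul_cancel, hone] at h2
        exact h2
      have hfinj : Function.Injective ((L h).restrict hh) := by
        intro a b hab
        exact Subtype.ext (hinj (congrArg Subtype.val hab))
      obtain ⟨y, hy⟩ := LinearMap.surjective_of_injective hfinj ⟨x, hx⟩
      have hy' : L h (y : V) = x := congrArg Subtype.val hy
      have hfin : L h⁻¹ x = (y : V) := by
        rw [← hy']; simp only [hL, hoo, inv_mul_cancel, hone]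
      rw [hfin]; exact y.2
    let S : Subgroup G :=
      { carrier := {h : G | ∀ x ∈ W, L h x ∈ W}
        one_mem' := by
          intro x hx
          simp only [hL, hone]
          exact hx
        mul_mem' := by
          intro a b ha hb x hx
          have hm := ha (L b x) (hb x hx)
          simp only [hL, hoo] at hm ⊢
          exact hm
        inv_mem' := by intro a ha; exact hinv a ha }
    have hS : ∀ h : G, ∀ x ∈ W, L h x ∈ W := by
      have hStop : S = ⊤ := by
        rw [eq_top_iff, ← hgen]
        apply (Subgroup.closure_le S).mpr
        intro h hh
        simp only [Set.mem_insert_iff, Set.mem_singleton_iff] at hh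
        rcases hh with rfl | rfl | rfl
        · exact hWg
        · exact hWε
        · exact hWz
      intro h
      have : h ∈ S := hStop ▸ Subgroup.mem_top h
      exact this
    have hsmul : ∀ (a : MonoidAlgebra K G), ∀ x ∈ W, a • x ∈ W := by
      intro a
      refine MonoidAlgebra.induction_on (motive := fun a => ∀ x ∈ W, a • x ∈ W) a ?_ ?_ ?_
      · intro h x hx
        have := hS h x hx
        simp only [hL] at this
        exact this
      · intro p q hp hq x hx
        rw [add_smul]; exact W.add_mem (hp x hx) (hq x hx)
      · intro r p hp x hx
        rw [smul_assoc]; exact W.smul_mem r (hp x hx)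
    let W' : Submodule (MonoidAlgebra K G) V :=
      { carrier := W
        add_mem' := fun ha hb => W.add_mem ha hb
        zero_mem' := W.zero_mem
        smul_mem' := by intro c x hx; exact hsmul c x hx }
    rcases eq_bot_or_eq_top W' with h | h
    · left; rw [eq_bot_iff]; intro x hx
      have hx' : x ∈ W' := hx
      rw [h] at hx'
      simpa using hx'
    · right; rw [eq_top_iff]; intro x _
      have hx' : x ∈ W' := by rw [h]; trivial
      exact hx'
  -- group-theoretic consequences of the relations
  have h1 : g * ε = ε ^ 2 * g := by rw [← hrel1]; group
  have hgεε : g * (ε * ε) = ε * g := by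
    calc g * (ε * ε) = g * ε * ε := by rw [mul_assoc]
      _ = ε ^ 2 * g * ε := by rw [h1]
      _ = ε ^ 2 * (g * ε) := by rw [mul_assoc]
      _ = ε ^ 2 * (ε ^ 2 * g) := by rw [h1]
      _ = ε ^ 3 * (ε * g) := by group
      _ = ε * g := by rw [hrel2, one_mul]
  have hεg : ε * g = g * (ε * ε) := hgεε.symm
  have hεεg : ε * (ε * g) = g * ε := by
    calc ε * (ε * g) = ε ^ 2 * g := by rw [pow_two, mul_assoc]
      _ = g * ε := h1.symm
  have hεεε : ε * (ε * ε) = 1 := by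
    rw [← hrel2, pow_succ, pow_two, mul_assoc]
  have hεz : ε * z = z * ε := hrel4.symm
  have hεεz : ε * (ε * z) = z * (ε * ε) := by
    rw [hεz]
    rw [show ε * (z * ε) = ε * z * ε from by rw [mul_assoc]]
    rw [hεz, mul_assoc]
  -- pointwise commutation facts
  have hcg : ∀ x : V, L ε (L g x) = L g (L ε (L ε x)) := by
    intro x; simp only [hL, hoo, hεg]
  have hcg2 : ∀ x : V, L ε (L ε (L g x)) = L g (L ε x) := by
    intro x; simp only [hL, hoo, hεεg]
  have hcz : ∀ x : V, L ε (L z x) = L z (L ε x) := by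
    intro x; simp only [hL, hoo, hεz]
  have hcz2 : ∀ x : V, L ε (L ε (L z x)) = L z (L ε (L ε x)) := by
    intro x; simp only [hL, hoo, hεεz]
  have he3 : ∀ x : V, L ε (L ε (L ε x)) = x := by
    intro x; simp only [hL, hoo, hεεε, hone]
  -- the operator T = 1 + ε + ε²
  let T : Module.End K V := 1 + L ε + L ε * L ε
  have hT : ∀ x : V, T x = x + L ε x + L ε (L ε x) := by
    intro x
    show (1 + L ε + L ε * L ε) x = _
    simp only [LinearMap.add_apply, Module.End.mul_apply, Module.End.one_apply]
  have hTg : ∀ x : V, T (L g x) = L g (T x) := by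
    intro x
    rw [hT, hT, hcg2 x, hcg x, map_add, map_add]
    abel
  have hTε : ∀ x : V, T (L ε x) = L ε (T x) := by
    intro x
    rw [hT, hT, map_add, map_add]
  have hTz : ∀ x : V, T (L z x) = L z (T x) := by
    intro x
    rw [hT, hT, hcz2 x, hcz x, map_add, map_add]
  -- ε acting trivially contradicts simplicity in dimension 2
  have habs : (∀ x : V, L ε x = x) → False := by
    intro htriv
    obtain ⟨c, hc⟩ := Module.End.exists_eigenvalue (L g)
    obtain ⟨v, hv⟩ := hc.exists_hasEigenvector
    have hEz : ∀ xx ∈ Module.End.eigenspace (L g) c,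
        L z xx ∈ Module.End.eigenspace (L g) c := by
      intro xx hxx
      rw [Module.End.mem_eigenspace_iff] at hxx ⊢
      have hzg : L g (L z xx) = L z (L g xx) := by
        simp only [hL, hoo, hrel3]
      rw [hzg, hxx, map_smul]
    haveI : Nontrivial (Module.End.eigenspace (L g) c) := by
      refine nontrivial_of_ne ⟨v, hv.1⟩ 0 ?_
      intro hcon
      exact hv.2 (congrArg Subtype.val hcon)
    obtain ⟨μ, hμ⟩ := Module.End.exists_eigenvalue ((L z).restrict hEz)
    obtain ⟨w, hw⟩ := hμ.exists_hasEigenvector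
    have hw1 : L g (w : V) = c • (w : V) := Module.End.mem_eigenspace_iff.mp w.2
    have hw2 : L z (w : V) = μ • (w : V) := by
      have h5 := Module.End.mem_eigenspace_iff.mp hw.1
      have h6 := congrArg Subtype.val h5
      simpa [LinearMap.restrict_apply] using h6
    have hwne : (w : V) ≠ 0 := fun hcon => hw.2 (Subtype.ext hcon)
    have hmemself : (w : V) ∈ Submodule.span K {(w : V)} :=
      Submodule.mem_span_singleton_self _
    have sg : ∀ x ∈ Submodule.span K {(w : V)}, L g x ∈ Submodule.span K {(w : V)} := by
      intro x hx
      obtain ⟨a, rfl⟩ := Submodule.mem_span_singleton.mp hx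
      rw [map_smul, hw1]
      exact Submodule.smul_mem _ a (Submodule.smul_mem _ c hmemself)
    have sε : ∀ x ∈ Submodule.span K {(w : V)}, L ε x ∈ Submodule.span K {(w : V)} := by
      intro x hx; rw [htriv x]; exact hx
    have sz : ∀ x ∈ Submodule.span K {(w : V)}, L z x ∈ Submodule.span K {(w : V)} := by
      intro x hx
      obtain ⟨a, rfl⟩ := Submodule.mem_span_singleton.mp hx
      rw [map_smul, hw2]
      exact Submodule.smul_mem _ a (Submodule.smul_mem _ μ hmemself)
    rcases stab _ sg sε sz with hbot | htop
    · rw [hbot] at hmemself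
      exact hwne (by simpa using hmemself)
    · have hr1 : Module.finrank K (Submodule.span K {(w : V)}) = 1 :=
        finrank_span_singleton hwne
      rw [htop, finrank_top] at hr1
      rw [hdim] at hr1
      norm_num at hr1
  -- T = 0 or ε acts trivially
  have main : (∀ x : V, T x = 0) ∨ (∀ x : V, L ε x = x) := by
    have kg : ∀ x ∈ LinearMap.ker T, L g x ∈ LinearMap.ker T := by
      intro x hx
      rw [LinearMap.mem_ker] at hx ⊢
      rw [hTg, hx, map_zero]
    have kε : ∀ x ∈ LinearMap.ker T, L ε x ∈ LinearMap.ker T := by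
      intro x hx
      rw [LinearMap.mem_ker] at hx ⊢
      rw [hTε, hx, map_zero]
    have kz : ∀ x ∈ LinearMap.ker T, L z x ∈ LinearMap.ker T := by
      intro x hx
      rw [LinearMap.mem_ker] at hx ⊢
      rw [hTz, hx, map_zero]
    rcases stab _ kg kε kz with hbot | htop
    · right
      have hinj : Function.Injective T := LinearMap.ker_eq_bot.mp hbot
      have hsurj := LinearMap.surjective_of_injective hinj
      intro x
      obtain ⟨y, rfl⟩ := hsurj x
      calc L ε (T y) = L ε y + L ε (L ε y) + L ε (L ε (L ε y)) := by
            rw [hT, map_add, map_add]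
        _ = L ε y + L ε (L ε y) + y := by rw [he3]
        _ = T y := by rw [hT]; abel
    · left
      intro x
      have hx : x ∈ LinearMap.ker T := htop ▸ Submodule.mem_top
      exact LinearMap.mem_ker.mp hx
  have hTzero : ∀ x : V, T x = 0 := by
    rcases main with h | h
    · exact h
    · exact (habs h).elim
  constructor
  · -- characteristic is not 3
    intro hchar
    have h3 : (3 : K) = 0 := by
      have := (ringChar.spec K 3).mpr (by rw [hchar])
      exact_mod_cast this
    -- B = ε - 1 squares to zero
    let B : Module.End K V := L ε - 1
    have hBx : ∀ x : V, B x = L ε x - x := by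
      intro x
      show (L ε - 1) x = _
      simp only [LinearMap.sub_apply, Module.End.one_apply]
    have hBB : ∀ x : V, B (B x) = 0 := by
      intro x
      rw [hBx, hBx, map_sub]
      have hTx := hTzero x
      rw [hT] at hTx
      have key : L ε (L ε x) - L ε x - (L ε x - x)
          = (x + L ε x + L ε (L ε x)) - (3 : K) • (L ε x) := by
        rw [show (3 : K) • (L ε x) = L ε x + L ε x + L ε x from by
          rw [show (3 : K) = 1 + 1 + 1 from by norm_num, add_smul, add_smul, one_smul]]
        abel
      rw [key, hTx, h3, zero_smul, sub_zero]
    have kg : ∀ x ∈ LinearMap.ker B, L g x ∈ LinearMap.ker B := by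
      intro x hx
      rw [LinearMap.mem_ker, hBx, sub_eq_zero] at hx
      rw [LinearMap.mem_ker, hBx, sub_eq_zero, hcg, hx, hx]
    have kε : ∀ x ∈ LinearMap.ker B, L ε x ∈ LinearMap.ker B := by
      intro x hx
      rw [LinearMap.mem_ker, hBx, sub_eq_zero] at hx
      rw [LinearMap.mem_ker, hBx, sub_eq_zero, hx]
      exact hx
    have kz : ∀ x ∈ LinearMap.ker B, L z x ∈ LinearMap.ker B := by
      intro x hx
      rw [LinearMap.mem_ker, hBx, sub_eq_zero] at hx
      rw [LinearMap.mem_ker, hBx, sub_eq_zero, hcz, hx]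
    rcases stab _ kg kε kz with hbot | htop
    · obtain ⟨v, hv⟩ := exists_ne (0 : V)
      have hm : B v ∈ LinearMap.ker B := LinearMap.mem_ker.mpr (hBB v)
      rw [hbot] at hm
      have hBv : B v = 0 := by simpa using hm
      have hm2 : v ∈ LinearMap.ker B := LinearMap.mem_ker.mpr hBv
      rw [hbot] at hm2
      exact hv (by simpa using hm2)
    · apply habs
      intro x
      have hx : x ∈ LinearMap.ker B := htop ▸ Submodule.mem_top
      have hx' := LinearMap.mem_ker.mp hx
      rw [hBx, sub_eq_zero] at hx'
      exact hx'
  · intro x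
    have hTx := hTzero x
    rw [hT] at hTx
    simp only [hL, hoo] at hTx
    rw [pow_two]
    exact hTx
end

section
/- If V and W are 2-dimensional simple K G-modules and there exist scalars c, d ∈ K such that g²·x = c·x and z·x = d·x for all x ∈ V and all x ∈ W, then V and W are isomorphic as K G-modules. -/
open MonoidAlgebra Module

section Aux

variable {K : Type*} [Field K] {G : Type*} [Group G]
variable {V : Type*} [AddCommGroup V] [Module K V]
  [Module (MonoidAlgebra K G) V] [IsScalarTower K (MonoidAlgebra K G) V]

/-- the action of a monoid-algebra element as a `K`-linear endomorphism -/
noncomputable def actL (a : MonoidAlgebra K G) : V →ₗ[K] V where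
  toFun x := a • x
  map_add' := smul_add a
  map_smul' k x := (smul_comm k a x).symm

@[simp] lemma actL_apply (a : MonoidAlgebra K G) (x : V) : actL a x = a • x := rfl

lemma of_mul_smul (a b : G) (x : V) :
    of K G (a * b) • x = of K G a • (of K G b • x) := by
  rw [map_mul, mul_smul]

lemma of_inv_smul_smul (a : G) (x : V) : of K G a⁻¹ • (of K G a • x) = x := by
  rw [← of_mul_smul, inv_mul_cancel, MonoidAlgebra.of_apply, ← MonoidAlgebra.one_def, one_smul]

lemma of_smul_inv_smul (a : G) (x : V) : of K G a • (of K G a⁻¹ • x) = x := by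
  rw [← of_mul_smul, mul_inv_cancel, MonoidAlgebra.of_apply, ← MonoidAlgebra.one_def, one_smul]

/-- A `K`-subspace stable under the generators is `⊥` or `⊤`. -/
lemma aux_sub [FiniteDimensional K V] {g ε z : G}
    (hgen : Subgroup.closure {g, ε, z} = ⊤)
    [IsSimpleModule (MonoidAlgebra K G) V]
    (U : Submodule K V)
    (hg : ∀ x ∈ U, of K G g • x ∈ U) (hε : ∀ x ∈ U, of K G ε • x ∈ U)
    (hz : ∀ x ∈ U, of K G z • x ∈ U) : U = ⊥ ∨ U = ⊤ := by
  -- the subgroup of elements stabilizing U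
  let S : Subgroup G :=
    { carrier := {σ | ∀ x ∈ U, of K G σ • x ∈ U}
      one_mem' := by
        intro x hx
        rwa [MonoidAlgebra.of_apply, ← MonoidAlgebra.one_def, one_smul]
      mul_mem' := by
        intro a b ha hb x hx
        rw [of_mul_smul]
        exact ha _ (hb _ hx)
      inv_mem' := by
        intro a ha
        -- action of a as a linear equivalence
        let e : V ≃ₗ[K] V :=
          { toFun := fun x => of K G a • x
            map_add' := smul_add _
            map_smul' := fun k x => (smul_comm k _ x).symm
            invFun := fun x => of K G a⁻¹ • x
            left_inv := of_inv_smul_smul a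
            right_inv := of_smul_inv_smul a }
        have hmaple : U.map (e : V →ₗ[K] V) ≤ U := by
          rintro _ ⟨y, hy, rfl⟩
          exact ha _ hy
        have hmap : U.map (e : V →ₗ[K] V) = U :=
          Submodule.eq_of_le_of_finrank_le hmaple (le_of_eq (e.finrank_map_eq U).symm)
        intro x hx
        rw [← hmap] at hx
        obtain ⟨y, hy, rfl⟩ := hx
        show of K G a⁻¹ • (e y) ∈ U
        show of K G a⁻¹ • (of K G a • y) ∈ U
        rwa [of_inv_smul_smul] }
  have hS : ∀ σ : G, ∀ x ∈ U, of K G σ • x ∈ U := by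
    intro σ
    have : σ ∈ S := by
      have : Subgroup.closure {g, ε, z} ≤ S := by
        rw [Subgroup.closure_le]
        rintro a (rfl | rfl | rfl)
        exacts [hg, hε, hz]
      exact this (hgen ▸ Subgroup.mem_top σ)
    exact this
  -- upgrade U to a MonoidAlgebra-submodule
  let U' : Submodule (MonoidAlgebra K G) V :=
    { carrier := U
      add_mem' := fun ha hb => U.add_mem ha hb
      zero_mem' := U.zero_mem
      smul_mem' := by
        intro a x hx
        induction a using MonoidAlgebra.induction_on with
        | of σ => exact hS σ x hx
        | add f g hf hg => rw [add_smul]; exact U.add_mem hf hg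
        | smul r f hf => rw [smul_assoc]; exact U.smul_mem r hf }
  rcases eq_bot_or_eq_top U' with h | h
  · left; rw [eq_bot_iff]; intro x hx
    have : x ∈ U' := hx
    rw [h] at this
    simpa using this
  · right; rw [eq_top_iff]; intro x _
    have : x ∈ U' := h ▸ Submodule.mem_top
    exact this

lemma of_smul_comm (a : G) (k : K) (y : V) :
    of K G a • (k • y) = k • (of K G a • y) := (smul_comm k _ y).symm

/-- Eigenvalue analysis for the action of `ε` on a 2-dimensional simple module. -/
lemma aux_eig [IsAlgClosed K] {g ε z : G}
    (hgen : Subgroup.closure {g, ε, z} = ⊤)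
    [IsSimpleModule (MonoidAlgebra K G) V]
    (hrelεg : ε * g = g * (ε * ε)) (hrel2 : ε ^ 3 = 1)
    (hzε : z * ε = ε * z)
    (d : K) (hVz : ∀ x : V, of K G z • x = d • x)
    (hV : Module.finrank K V = 2) :
    ∃ lam : K, lam ^ 3 = 1 ∧ lam ≠ 1 ∧
      ∀ μ : K, μ ^ 3 = 1 → μ ≠ 1 → ∃ v : V, v ≠ 0 ∧ of K G ε • v = μ • v := by
  have hfd : FiniteDimensional K V := FiniteDimensional.of_finrank_eq_succ hV
  have hnt : Nontrivial V := Module.nontrivial_of_finrank_pos (R := K) (by omega)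
  have h3 : ε ^ 3 = ε * ε * ε := by rw [pow_succ, pow_succ, pow_one]
  -- the action of ε cubes to the identity
  have hE3 : ∀ x : V, of K G ε • (of K G ε • (of K G ε • x)) = x := by
    intro x
    rw [← of_mul_smul, ← of_mul_smul, ← h3, hrel2, MonoidAlgebra.of_apply,
      ← MonoidAlgebra.one_def, one_smul]
  -- an eigenvalue of the action of ε
  obtain ⟨lam, hlam⟩ := Module.End.exists_eigenvalue (actL (of K G ε) : Module.End K V)
  obtain ⟨v, hv⟩ := hlam.exists_hasEigenvector
  have hvε : of K G ε • v = lam • v := by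
    have := Module.End.mem_eigenspace_iff.mp hv.1
    simpa [actL] using this
  have hvne : v ≠ 0 := hv.2
  have hlam3 : lam ^ 3 = 1 := by
    have s1 : of K G ε • (of K G ε • (of K G ε • v)) = lam • (lam • (lam • v)) := by
      rw [hvε, of_smul_comm, hvε, of_smul_comm, of_smul_comm, hvε]
    have h1 : of K G ε • (of K G ε • (of K G ε • v)) = lam ^ 3 • v := by
      rw [s1, smul_smul, smul_smul]; ring_nf
    have h2 : (lam ^ 3 - 1) • v = 0 := by
      rw [sub_smul, one_smul, ← h1, hE3 v, sub_self]
    rcases smul_eq_zero.mp h2 with h | h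
    · exact sub_eq_zero.mp h
    · exact absurd h hvne
  -- the fixed subspace of ε
  let F : Submodule K V :=
    { carrier := {x | of K G ε • x = x}
      add_mem' := by intro a b ha hb; simp only [Set.mem_setOf_eq] at *; rw [smul_add, ha, hb]
      zero_mem' := by simp
      smul_mem' := by intro k x hx; simp only [Set.mem_setOf_eq] at *; rw [of_smul_comm, hx] }
  have hFmem : ∀ x : V, x ∈ F ↔ of K G ε • x = x := fun _ => Iff.rfl
  have hF : F = ⊥ ∨ F = ⊤ := by
    apply aux_sub hgen
    · intro x hx
      rw [hFmem] at hx ⊢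
      rw [← of_mul_smul, hrelεg, of_mul_smul, of_mul_smul, hx, hx]
    · intro x hx
      rw [hFmem] at hx ⊢
      rw [hx]
      exact hx
    · intro x hx
      rw [hFmem] at hx ⊢
      rw [← of_mul_smul, ← hzε, of_mul_smul, hx]
  rcases hF with hF | hF
  · -- ε has no nonzero fixed vector
    have hlamne : lam ≠ 1 := by
      intro h
      have : v ∈ F := by rw [hFmem, hvε, h, one_smul]
      rw [hF] at this
      exact hvne (by simpa using this)
    have hq : lam ^ 2 + lam + 1 = 0 := by
      have h : (lam - 1) * (lam ^ 2 + lam + 1) = 0 := by linear_combination hlam3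
      rcases mul_eq_zero.mp h with h | h
      · exact absurd (sub_eq_zero.mp h) hlamne
      · exact h
    refine ⟨lam, hlam3, hlamne, ?_⟩
    intro μ hμ3 hμ1
    have hqμ : μ ^ 2 + μ + 1 = 0 := by
      have h : (μ - 1) * (μ ^ 2 + μ + 1) = 0 := by linear_combination hμ3
      rcases mul_eq_zero.mp h with h | h
      · exact absurd (sub_eq_zero.mp h) hμ1
      · exact h
    have hcases : (μ - lam) * (μ + lam + 1) = 0 := by linear_combination hqμ - hq
    rcases mul_eq_zero.mp hcases with h | h
    · exact ⟨v, hvne, by rw [hvε, sub_eq_zero.mp h]⟩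
    · -- μ = lam ^ 2; use g • v
      have hμlam : μ = lam ^ 2 := by linear_combination h - hq
      refine ⟨of K G g • v, ?_, ?_⟩
      · intro h0
        apply hvne
        have h2 : of K G g⁻¹ • (of K G g • v) = of K G g⁻¹ • (0 : V) :=
          congrArg (fun y => of K G g⁻¹ • y) h0
        rwa [of_inv_smul_smul, smul_zero] at h2
      · rw [← of_mul_smul, hrelεg, of_mul_smul, of_mul_smul, hvε, of_smul_comm, hvε,
          of_smul_comm, of_smul_comm, smul_smul, hμlam, pow_two]
  · -- ε acts trivially: contradiction with simplicity in dimension 2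
    exfalso
    obtain ⟨μ, hμ⟩ := Module.End.exists_eigenvalue (actL (of K G g) : Module.End K V)
    obtain ⟨u, hu⟩ := hμ.exists_hasEigenvector
    have huε : of K G g • u = μ • u := by
      have := Module.End.mem_eigenspace_iff.mp hu.1
      simpa [actL] using this
    have hune : u ≠ 0 := hu.2
    have htriv : ∀ x : V, of K G ε • x = x := by
      intro x
      have : x ∈ F := hF ▸ Submodule.mem_top
      exact this
    have hU : Submodule.span K {u} = ⊥ ∨ Submodule.span K {u} = ⊤ := by
      apply aux_sub hgen
      · intro x hx
        obtain ⟨k, rfl⟩ := Submodule.mem_span_singleton.mp hx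
        rw [of_smul_comm, huε, smul_smul]
        exact Submodule.mem_span_singleton.mpr ⟨k * μ, rfl⟩
      · intro x hx; rwa [htriv x]
      · intro x hx
        rw [hVz x]
        exact Submodule.smul_mem _ d hx
    rcases hU with hU | hU
    · have hmem := Submodule.mem_span_singleton_self (R := K) u
      rw [hU] at hmem
      exact hune (by simpa using hmem)
    · have h1 : Module.finrank K (Submodule.span K {u}) = 1 := finrank_span_singleton hune
      rw [hU, finrank_top, hV] at h1
      exact absurd h1 (by norm_num)

lemma of_smul_ne_zero {a : G} {v : V} (hv : v ≠ 0) : of K G a • v ≠ 0 := by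
  intro h0
  apply hv
  have h2 : of K G a⁻¹ • (of K G a • v) = of K G a⁻¹ • (0 : V) :=
    congrArg (fun y => of K G a⁻¹ • y) h0
  rwa [of_inv_smul_smul, smul_zero] at h2

lemma aux_eig_g {g ε : G} (hrelεg : ε * g = g * (ε * ε)) {μ : K} {v : V}
    (hv : of K G ε • v = μ • v) :
    of K G ε • (of K G g • v) = (μ * μ) • (of K G g • v) := by
  rw [← of_mul_smul, hrelεg, of_mul_smul, of_mul_smul, hv, of_smul_comm, hv,
    of_smul_comm, of_smul_comm, smul_smul]

end Aux

/-- Let `K` be an algebraically closed field and `G` a non-abelian epimorphic image of the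
group `Γ₃`, via `γ ↦ g`, `ν ↦ ε`, `ζ ↦ z`.  If `V` and `W` are 2-dimensional simple
`K G`-modules on which `g²` and `z` act by the same scalars `c` and `d` respectively,
then `V` and `W` are isomorphic as `K G`-modules. -/
theorem simple_dim_two_iso_of_same_scalars
    {K : Type*} [Field K] [IsAlgClosed K] {G : Type*} [Group G]
    (g ε z : G) (hε : ε ≠ 1)
    (hgen : Subgroup.closure {g, ε, z} = ⊤)
    (hrel1 : g * ε * g⁻¹ = ε ^ 2) (hrel2 : ε ^ 3 = 1)
    (hrel3 : z * g = g * z) (hrel4 : z * ε = ε * z)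
    (V W : Type*) [AddCommGroup V] [Module K V]
    [Module (MonoidAlgebra K G) V] [IsScalarTower K (MonoidAlgebra K G) V]
    [AddCommGroup W] [Module K W]
    [Module (MonoidAlgebra K G) W] [IsScalarTower K (MonoidAlgebra K G) W]
    [IsSimpleModule (MonoidAlgebra K G) V] [IsSimpleModule (MonoidAlgebra K G) W]
    (hV : Module.finrank K V = 2) (hW : Module.finrank K W = 2)
    (c d : K)
    (hVg : ∀ x : V, MonoidAlgebra.of K G (g ^ 2) • x = c • x)
    (hVz : ∀ x : V, MonoidAlgebra.of K G z • x = d • x)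
    (hWg : ∀ x : W, MonoidAlgebra.of K G (g ^ 2) • x = c • x)
    (hWz : ∀ x : W, MonoidAlgebra.of K G z • x = d • x) :
    Nonempty (V ≃ₗ[MonoidAlgebra K G] W) := by
  classical
  have hfdV : FiniteDimensional K V := FiniteDimensional.of_finrank_eq_succ hV
  have hfdW : FiniteDimensional K W := FiniteDimensional.of_finrank_eq_succ hW
  -- the derived relation  ε g = g ε²
  have key : ε * g = g * (ε * ε) := by
    have h1 : g * ε = ε ^ 2 * g := by rw [← hrel1]; group
    have h4 : ε ^ 4 = ε := by
      rw [show (4 : ℕ) = 3 + 1 from rfl, pow_add, hrel2, one_mul, pow_one]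
    calc ε * g = ε ^ 4 * g := by rw [h4]
      _ = ε ^ 2 * ε ^ 2 * g := by rw [← pow_add]
      _ = ε ^ 2 * (ε ^ 2 * g) := by rw [mul_assoc]
      _ = ε ^ 2 * (g * ε) := by rw [h1]
      _ = ε ^ 2 * g * ε := by rw [mul_assoc]
      _ = g * ε * ε := by rw [← h1]
      _ = g * (ε * ε) := by rw [mul_assoc]
  obtain ⟨lam, hlam3, hlamne, hVeig⟩ := aux_eig (V := V) hgen key hrel2 hrel4 d hVz hV
  obtain ⟨lam', hlam3', hlamne', hWeig⟩ := aux_eig (V := W) hgen key hrel2 hrel4 d hWz hW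
  obtain ⟨v, hvne, hvε⟩ := hVeig lam hlam3 hlamne
  obtain ⟨w, hwne, hwε⟩ := hWeig lam hlam3 hlamne
  set v1 : V := MonoidAlgebra.of K G g • v with hv1def
  set w1 : W := MonoidAlgebra.of K G g • w with hw1def
  have hv1ne : v1 ≠ 0 := of_smul_ne_zero hvne
  have hw1ne : w1 ≠ 0 := of_smul_ne_zero hwne
  have hv1ε : MonoidAlgebra.of K G ε • v1 = (lam * lam) • v1 := aux_eig_g key hvε
  have hw1ε : MonoidAlgebra.of K G ε • w1 = (lam * lam) • w1 := aux_eig_g key hwε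
  have hlamne0 : lam ≠ 0 := by
    intro h; rw [h] at hlam3; norm_num at hlam3
  have hlamsq : lam * lam - lam ≠ 0 := by
    intro h
    have : lam * (lam - 1) = 0 := by linear_combination h
    rcases mul_eq_zero.mp this with h' | h'
    · exact hlamne0 h'
    · exact hlamne (sub_eq_zero.mp h')
  -- ⟨v, v1⟩ are linearly independent since they are eigenvectors for distinct eigenvalues
  have hli : LinearIndependent K ![v, v1] := by
    rw [LinearIndependent.pair_iff]
    intro s t hst
    have h1 : (s * lam) • v + (t * (lam * lam)) • v1 = 0 := by
      have h := congrArg (fun y => MonoidAlgebra.of K G ε • y) hst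
      simp only [smul_add, smul_zero] at h
      rwa [of_smul_comm, of_smul_comm, hvε, hv1ε, smul_smul, smul_smul] at h
    have h2 : (s * lam) • v + (t * lam) • v1 = 0 := by
      have h := congrArg (fun y => lam • y) hst
      simp only [smul_add, smul_zero, smul_smul] at h
      rwa [mul_comm lam s, mul_comm lam t] at h
    have h3 : (t * (lam * lam) - t * lam) • v1 = 0 := by
      rw [sub_smul]
      have := congrArg₂ (fun a b => a - b) h1 h2
      simpa [add_sub_add_left_eq_sub] using this
    have ht : t = 0 := by
      rcases smul_eq_zero.mp h3 with h' | h'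
      · have : t * (lam * lam - lam) = 0 := by linear_combination h'
        rcases mul_eq_zero.mp this with h'' | h''
        · exact h''
        · exact absurd h'' hlamsq
      · exact absurd h' hv1ne
    subst ht
    have hs : s = 0 := by
      rcases smul_eq_zero.mp (by simpa using hst : s • v = 0) with h' | h'
      · exact h'
      · exact absurd h' hvne
    exact ⟨hs, rfl⟩
  let b : Basis (Fin 2) K V := basisOfLinearIndependentOfCardEqFinrank hli (by simp [hV])
  have hb0 : b 0 = v := by
    simp [b, coe_basisOfLinearIndependentOfCardEqFinrank]
  have hb1 : b 1 = v1 := by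
    simp [b, coe_basisOfLinearIndependentOfCardEqFinrank]
  let f : V →ₗ[K] W := b.constr K ![w, w1]
  have hfv : f v = w := by
    rw [← hb0]
    simpa [f] using b.constr_basis K ![w, w1] 0
  have hfv1 : f v1 = w1 := by
    rw [← hb1]
    simpa [f] using b.constr_basis K ![w, w1] 1
  -- f commutes with the three generators
  have hcomg : ∀ x : V, MonoidAlgebra.of K G g • f x = f (MonoidAlgebra.of K G g • x) := by
    have heq : (actL (MonoidAlgebra.of K G g)).comp f = f.comp (actL (MonoidAlgebra.of K G g)) := by
      apply b.ext
      intro i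
      fin_cases i
      · simp only [Fin.zero_eta, Fin.isValue, LinearMap.comp_apply, actL_apply, hb0, hfv, hfv1, ← hv1def, ← hw1def]
      · simp only [Fin.mk_one, Fin.isValue, LinearMap.comp_apply, actL_apply, hb1, hfv1]
        have hVg' : MonoidAlgebra.of K G g • v1 = c • v := by
          rw [hv1def, ← of_mul_smul, ← pow_two, hVg]
        have hWg' : MonoidAlgebra.of K G g • w1 = c • w := by
          rw [hw1def, ← of_mul_smul, ← pow_two, hWg]
        rw [hVg', hWg', f.map_smul, hfv]
    intro x
    exact LinearMap.ext_iff.mp heq x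
  have hcomε : ∀ x : V, MonoidAlgebra.of K G ε • f x = f (MonoidAlgebra.of K G ε • x) := by
    have heq : (actL (MonoidAlgebra.of K G ε)).comp f = f.comp (actL (MonoidAlgebra.of K G ε)) := by
      apply b.ext
      intro i
      fin_cases i
      · simp only [Fin.zero_eta, Fin.isValue, LinearMap.comp_apply, actL_apply, hb0, hfv]
        rw [hvε, hwε, f.map_smul, hfv]
      · simp only [Fin.mk_one, Fin.isValue, LinearMap.comp_apply, actL_apply, hb1, hfv1]
        rw [hv1ε, hw1ε, f.map_smul, hfv1]
    intro x
    exact LinearMap.ext_iff.mp heq x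
  have hcomz : ∀ x : V, MonoidAlgebra.of K G z • f x = f (MonoidAlgebra.of K G z • x) := by
    intro x
    rw [hVz, hWz, f.map_smul]
  -- f commutes with every group element
  have hcom : ∀ σ : G, ∀ x : V, MonoidAlgebra.of K G σ • f x = f (MonoidAlgebra.of K G σ • x) := by
    let S : Subgroup G :=
      { carrier := {σ | ∀ x : V, MonoidAlgebra.of K G σ • f x = f (MonoidAlgebra.of K G σ • x)}
        one_mem' := by
          intro x
          rw [MonoidAlgebra.of_apply, ← MonoidAlgebra.one_def, one_smul, one_smul]
        mul_mem' := by
          intro a b ha hb x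
          rw [of_mul_smul, of_mul_smul, hb, ha]
        inv_mem' := by
          intro a ha x
          have h := ha (MonoidAlgebra.of K G a⁻¹ • x)
          rw [of_smul_inv_smul] at h
          have h2 := congrArg (fun y => MonoidAlgebra.of K G a⁻¹ • y) h
          rw [of_inv_smul_smul] at h2
          exact h2.symm }
    intro σ
    have hσ : σ ∈ S := by
      have hle : Subgroup.closure {g, ε, z} ≤ S := by
        rw [Subgroup.closure_le]
        rintro a (rfl | rfl | rfl)
        exacts [hcomg, hcomε, hcomz]
      exact hle (hgen ▸ Subgroup.mem_top σ)
    exact hσ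
  -- upgrade f to a MonoidAlgebra-linear map
  let F : V →ₗ[MonoidAlgebra K G] W :=
    { toFun := f
      map_add' := f.map_add
      map_smul' := by
        intro a x
        simp only [RingHom.id_apply]
        induction a using MonoidAlgebra.induction_on with
        | of σ => exact (hcom σ x).symm
        | add p q hp hq => rw [add_smul, add_smul, f.map_add, hp, hq]
        | smul r p hp => rw [smul_assoc, smul_assoc, f.map_smul, hp] }
  have hFne : F ≠ 0 := by
    intro h
    apply hwne
    have : F v = 0 := by rw [h]; rfl
    rwa [show F v = w from hfv] at this
  rcases LinearMap.bijective_or_eq_zero F with hbij | h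
  · exact ⟨LinearEquiv.ofBijective F hbij⟩
  · exact absurd h hFne
end

section
/- In V ⊗ W let w′ = v₂⊗w₀ − ρ_z σ_ε² v₁⊗w₁. Then w′ ≠ 0, the three vectors w′, ε·w′, ε²·w′ are linearly independent, z·w′ = ρ_z σ_z w′, and g·w′ lies in K·w′ if and only if ρ_z² σ_ε σ_{g²} = 1; in that case g·w′ = −ρ_g ρ_z⁻¹ σ_ε w′. (This is the criterion for (ad V)(W) to be absolutely simple for the first pair.) -/
open TensorProduct

/-- Criterion for `(ad V)(W)` to be absolutely simple for the first pair over a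
non-abelian epimorphic image of `Γ₃`. -/
theorem first_pair_adV_W_simple_criterion
    {K : Type*} [Field K] {G : Type*} [Group G]
    (g ε z : G) (hε : ε ≠ 1)
    (hgen : Subgroup.closure {g, ε, z} = ⊤)
    (hrel1 : g * ε * g⁻¹ = ε ^ 2) (hrel2 : ε ^ 3 = 1)
    (hrel3 : z * g = g * z) (hrel4 : z * ε = ε * z)
    {V : Type*} [AddCommGroup V] [Module K V]
    (ρ : Representation K G V) (v : Module.Basis (Fin 3) K V)
    (ρg ρz : K) (hρg : ρg ≠ 0) (hρz : ρz ≠ 0)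
    (hεv0 : ρ ε (v 0) = v 1) (hεv1 : ρ ε (v 1) = v 2) (hεv2 : ρ ε (v 2) = v 0)
    (hzv : ∀ i, ρ z (v i) = ρz • v i)
    (hgv0 : ρ g (v 0) = ρg • v 0) (hgv1 : ρ g (v 1) = ρg • v 2)
    (hgv2 : ρ g (v 2) = ρg • v 1)
    {W : Type*} [AddCommGroup W] [Module K W]
    (σ : Representation K G W) (w : Module.Basis (Fin 2) K W)
    (σε σz σg2 : K) (hσε : σε ≠ 0) (hσz : σz ≠ 0) (hσg2 : σg2 ≠ 0)
    (hεw0 : σ ε (w 0) = σε • w 0) (hεw1 : σ ε (w 1) = σε ^ 2 • w 1)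
    (hzw0 : σ z (w 0) = σz • w 0) (hzw1 : σ z (w 1) = σz • w 1)
    (hgw0 : σ g (w 0) = w 1) (hgw1 : σ g (w 1) = σg2 • w 0) :
    ∀ w' : V ⊗[K] W,
      w' = v 2 ⊗ₜ[K] w 0 - (ρz * σε ^ 2) • (v 1 ⊗ₜ[K] w 1) →
      w' ≠ 0 ∧
      LinearIndependent K ![w', (ρ.tprod σ) ε w', (ρ.tprod σ) (ε ^ 2) w'] ∧
      (ρ.tprod σ) z w' = (ρz * σz) • w' ∧
      ((ρ.tprod σ) g w' ∈ Submodule.span K ({w'} : Set (V ⊗[K] W)) ↔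
        ρz ^ 2 * σε * σg2 = 1) ∧
      (ρz ^ 2 * σε * σg2 = 1 →
        (ρ.tprod σ) g w' = (-(ρg * ρz⁻¹ * σε)) • w') := by
  intro w' hw'
  -- σε³ = 1
  have hσε3 : σε ^ 3 = 1 := by
    have h1 : σ (ε ^ 3) (w 0) = w 0 := by rw [hrel2]; simp
    have h2 : σ (ε ^ 3) (w 0) = σε ^ 3 • w 0 := by
      rw [map_pow]
      show (σ ε) ((σ ε) ((σ ε) (w 0))) = _
      rw [hεw0, map_smul, hεw0, map_smul, map_smul, hεw0]
      rw [smul_smul, smul_smul]; ring_nf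
    have h3 : (σε ^ 3 - 1) • w 0 = 0 := by
      rw [sub_smul, one_smul, ← h2, h1, sub_self]
    rcases smul_eq_zero.mp h3 with h | h
    · exact sub_eq_zero.mp h
    · exact absurd h (w.ne_zero 0)
  set b : Module.Basis (Fin 3 × Fin 2) K (V ⊗[K] W) := Module.Basis.tensorProduct v w with hb
  have hcoord : ∀ (i a : Fin 3) (j c : Fin 2),
      b.coord (i, j) (v a ⊗ₜ[K] w c) = if a = i ∧ c = j then 1 else 0 := by
    intro i a j c
    simp only [hb, Module.Basis.coord_apply, Module.Basis.tensorProduct_repr_tmul_apply,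
      Module.Basis.repr_self, Finsupp.single_apply]
    by_cases h1 : a = i <;> by_cases h2 : c = j <;> simp [h1, h2]
  have e1 : (ρ.tprod σ) ε w' = σε • (v 0 ⊗ₜ[K] w 0) - (ρz * σε ^ 4) • (v 2 ⊗ₜ[K] w 1) := by
    rw [hw', Representation.tprod_apply, map_sub, map_smul, TensorProduct.map_tmul,
      TensorProduct.map_tmul, hεv2, hεv1, hεw0, hεw1]
    rw [TensorProduct.tmul_smul, TensorProduct.tmul_smul]
    module
  have e2 : (ρ.tprod σ) (ε ^ 2) w' = (σε ^ 2) • (v 1 ⊗ₜ[K] w 0) - (ρz * σε ^ 6) • (v 0 ⊗ₜ[K] w 1) := by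
    rw [map_pow, pow_two, Module.End.mul_apply, e1, Representation.tprod_apply, map_sub,
      map_smul, map_smul, TensorProduct.map_tmul, TensorProduct.map_tmul,
      hεv0, hεv2, hεw0, hεw1]
    rw [TensorProduct.tmul_smul, TensorProduct.tmul_smul]
    module
  have eg : (ρ.tprod σ) g w' = ρg • (v 1 ⊗ₜ[K] w 1) - (ρg * ρz * σε ^ 2 * σg2) • (v 2 ⊗ₜ[K] w 0) := by
    rw [hw', Representation.tprod_apply, map_sub, map_smul, TensorProduct.map_tmul,
      TensorProduct.map_tmul, hgv2, hgv1, hgw0, hgw1]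
    rw [TensorProduct.tmul_smul, ← TensorProduct.smul_tmul', ← TensorProduct.smul_tmul']
    module
  have e5 : ρz ^ 2 * σε * σg2 = 1 → (ρ.tprod σ) g w' = (-(ρg * ρz⁻¹ * σε)) • w' := by
    intro hcond
    have k1 : ρg * ρz * σε ^ 2 * σg2 = ρg * ρz⁻¹ * σε := by
      field_simp
      linear_combination hcond
    have k2 : (-(ρg * ρz⁻¹ * σε)) * (ρz * σε ^ 2) = -ρg := by
      field_simp
      linear_combination -hσε3
    rw [eg, k1, hw', smul_sub, smul_smul, k2]
    module
  refine ⟨?_, ?_, ?_, ?_, e5⟩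
  · intro h
    have h0 : b.coord (2, 0) w' = 1 := by
      rw [hw', map_sub, map_smul, hcoord, hcoord]
      norm_num
    rw [h, map_zero] at h0
    exact zero_ne_one h0
  · rw [Fintype.linearIndependent_iff]
    intro f hf
    rw [Fin.sum_univ_three] at hf
    simp only [Matrix.cons_val_zero, Matrix.cons_val_one, Matrix.head_cons,
      Matrix.cons_val_two, Matrix.tail_cons] at hf
    rw [e1, e2, hw'] at hf
    have c20 := congrArg (b.coord (2, 0)) hf
    have c00 := congrArg (b.coord (0, 0)) hf
    have c10 := congrArg (b.coord (1, 0)) hf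
    simp only [map_add, map_sub, map_smul, map_zero, hcoord] at c20 c00 c10
    norm_num [Fin.ext_iff] at c20 c00 c10
    have hf0 : f 0 = 0 := c20
    have hf1 : f 1 = 0 := by
      rcases c00 with h | h
      · exact h
      · exact absurd h hσε
    have hf2 : f 2 = 0 := by
      rcases c10 with h | h
      · exact h
      · exact absurd h hσε
    intro i
    fin_cases i <;> assumption
  · rw [hw', Representation.tprod_apply, map_sub, map_smul, TensorProduct.map_tmul,
      TensorProduct.map_tmul, hzv, hzv, hzw0, hzw1]
    rw [TensorProduct.tmul_smul, TensorProduct.tmul_smul, ← TensorProduct.smul_tmul',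
      ← TensorProduct.smul_tmul']
    module
  · constructor
    · intro hmem
      obtain ⟨c, hc⟩ := Submodule.mem_span_singleton.mp hmem
      rw [eg, hw'] at hc
      have c11 := congrArg (b.coord (1, 1)) hc
      have c20 := congrArg (b.coord (2, 0)) hc
      simp only [map_sub, map_smul, hcoord, smul_eq_mul] at c11 c20
      norm_num [Fin.ext_iff] at c11 c20
      have hσε4 : σε ^ 4 = σε := by
        calc σε ^ 4 = σε * σε ^ 3 := by ring
        _ = σε := by rw [hσε3, mul_one]
      have key : ρg * (ρz ^ 2 * σε ^ 4 * σg2) = ρg * 1 := by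
        linear_combination c11 + ρz * σε ^ 2 * c20
      have h4 := mul_left_cancel₀ hρg key
      linear_combination h4 - ρz ^ 2 * σε * σg2 * hσε3
    · intro hcond
      rw [e5 hcond]
      exact Submodule.smul_mem _ _ (Submodule.mem_span_singleton_self w')
end

section
/- Assume ρ_z² σ_ε σ_{g²} = 1, ρ_g = −1 and 1 + σ_ε + σ_ε² = 0. In V ⊗ W set w′ = v₂⊗w₀ − ρ_z σ_ε² v₁⊗w₁, and in V ⊗ (V ⊗ W) set w″ = (1 + ρ_g² σ_ε) v₀⊗w′ + ρ_g σ_ε² (v₁⊗(ε·w′) + v₂⊗(ε²·w′)). Then w″ ≠ 0 and w″ satisfies ε·w″ = w″, g·w″ = −ρ_z⁻¹ σ_ε w″ and z·w″ = ρ_z² σ_z w″. -/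
open TensorProduct

/-- For the first pair over a non-abelian epimorphic image of `Γ₃`, with
`ρ_z² σ_ε σ_{g²} = 1`, `ρ_g = −1` and `1 + σ_ε + σ_ε² = 0`, the vector
`w″ = (1 + ρ_g² σ_ε) v₀⊗w′ + ρ_g σ_ε² (v₁⊗(ε·w′) + v₂⊗(ε²·w′))` is non-zero,
fixed by `ε`, and `g` and `z` act on it by `−ρ_z⁻¹ σ_ε` and `ρ_z² σ_z`. -/
theorem first_pair_adV_sq_W
    {K : Type*} [Field K] {G : Type*} [Group G]
    (g ε z : G) (hε : ε ≠ 1)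
    (hgen : Subgroup.closure {g, ε, z} = ⊤)
    (hrel1 : g * ε * g⁻¹ = ε ^ 2) (hrel2 : ε ^ 3 = 1)
    (hrel3 : z * g = g * z) (hrel4 : z * ε = ε * z)
    {V : Type*} [AddCommGroup V] [Module K V]
    (ρ : Representation K G V) (v : Module.Basis (Fin 3) K V)
    (ρg ρz : K) (hρg : ρg ≠ 0) (hρz : ρz ≠ 0)
    (hεv0 : ρ ε (v 0) = v 1) (hεv1 : ρ ε (v 1) = v 2) (hεv2 : ρ ε (v 2) = v 0)
    (hzv : ∀ i, ρ z (v i) = ρz • v i)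
    (hgv0 : ρ g (v 0) = ρg • v 0) (hgv1 : ρ g (v 1) = ρg • v 2)
    (hgv2 : ρ g (v 2) = ρg • v 1)
    {W : Type*} [AddCommGroup W] [Module K W]
    (σ : Representation K G W) (w : Module.Basis (Fin 2) K W)
    (σε σz σg2 : K) (hσε : σε ≠ 0) (hσz : σz ≠ 0) (hσg2 : σg2 ≠ 0)
    (hεw0 : σ ε (w 0) = σε • w 0) (hεw1 : σ ε (w 1) = σε ^ 2 • w 1)
    (hzw0 : σ z (w 0) = σz • w 0) (hzw1 : σ z (w 1) = σz • w 1)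
    (hgw0 : σ g (w 0) = w 1) (hgw1 : σ g (w 1) = σg2 • w 0)
    (hcond1 : ρz ^ 2 * σε * σg2 = 1) (hcond2 : ρg = -1)
    (hcond3 : 1 + σε + σε ^ 2 = 0) :
    ∀ (w' : V ⊗[K] W) (w'' : V ⊗[K] (V ⊗[K] W)),
      w' = v 2 ⊗ₜ[K] w 0 - (ρz * σε ^ 2) • (v 1 ⊗ₜ[K] w 1) →
      w'' = (1 + ρg ^ 2 * σε) • (v 0 ⊗ₜ[K] w') +
        (ρg * σε ^ 2) •
          (v 1 ⊗ₜ[K] ((ρ.tprod σ) ε w') + v 2 ⊗ₜ[K] ((ρ.tprod σ) (ε ^ 2) w')) →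
      w'' ≠ 0 ∧
      (ρ.tprod (ρ.tprod σ)) ε w'' = w'' ∧
      (ρ.tprod (ρ.tprod σ)) g w'' = (-(ρz⁻¹ * σε)) • w'' ∧
      (ρ.tprod (ρ.tprod σ)) z w'' = (ρz ^ 2 * σz) • w'' := by
  intro w' w'' hw' hw''
  subst hcond2
  have ha3 : σε ^ 3 = 1 := by linear_combination (σε - 1) * hcond3
  have hσg2' : σg2 = σε ^ 2 * (ρz ^ 2)⁻¹ := by
    field_simp
    linear_combination σε ^ 2 * hcond1 - ρz ^ 2 * σg2 * ha3
  subst hσg2'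
  have hε2v0 : ρ (ε ^ 2) (v 0) = v 2 := by
    rw [pow_two, map_mul, Module.End.mul_apply, hεv0, hεv1]
  have hε2v1 : ρ (ε ^ 2) (v 1) = v 0 := by
    rw [pow_two, map_mul, Module.End.mul_apply, hεv1, hεv2]
  have hε2v2 : ρ (ε ^ 2) (v 2) = v 1 := by
    rw [pow_two, map_mul, Module.End.mul_apply, hεv2, hεv0]
  have hε2w0 : σ (ε ^ 2) (w 0) = (σε ^ 2) • w 0 := by
    rw [pow_two, map_mul, Module.End.mul_apply, hεw0, map_smul, hεw0, smul_smul]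
    module
  have hε2w1 : σ (ε ^ 2) (w 1) = (σε ^ 4) • w 1 := by
    rw [pow_two, map_mul, Module.End.mul_apply, hεw1, map_smul, hεw1, smul_smul]
    module
  have hw2 : w'' = (-(σε ^ 2)) • (v 0 ⊗ₜ[K] (v 2 ⊗ₜ[K] w 0))
      + (ρz * σε) • (v 0 ⊗ₜ[K] (v 1 ⊗ₜ[K] w 1))
      + (-1 : K) • (v 1 ⊗ₜ[K] (v 0 ⊗ₜ[K] w 0))
      + ρz • (v 1 ⊗ₜ[K] (v 2 ⊗ₜ[K] w 1))
      + (-σε) • (v 2 ⊗ₜ[K] (v 1 ⊗ₜ[K] w 0))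
      + (ρz * σε ^ 2) • (v 2 ⊗ₜ[K] (v 0 ⊗ₜ[K] w 1)) := by
    rw [hw'', hw']
    simp only [Representation.tprod_apply, map_sub, map_smul, TensorProduct.map_tmul,
      hεv1, hεv2, hεw0, hεw1, hε2v1, hε2v2, hε2w0, hε2w1,
      TensorProduct.tmul_smul, TensorProduct.tmul_sub, ← TensorProduct.smul_tmul',
      smul_smul]
    match_scalars
    · linear_combination hcond3
    · linear_combination (-ρz * σε) * hcond3
    · linear_combination -ha3
    · linear_combination ρz * (σε ^ 3 + 1) * ha3
    · linear_combination -σε * ha3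
    · linear_combination ρz * σε ^ 2 * (σε ^ 3 + 1) * ha3
  refine ⟨?_, ?_, ?_, ?_⟩
  · intro h0
    have h1 := congrArg (fun x => ((v.tensorProduct (v.tensorProduct w)).repr x)
      (0, (2, 0))) (hw2.symm.trans h0)
    simp only [map_add, map_smul, map_zero, Module.Basis.tensorProduct_repr_tmul_apply,
      Module.Basis.repr_self, Finsupp.coe_add, Finsupp.coe_smul, Pi.add_apply, Pi.smul_apply,
      Finsupp.coe_zero, Pi.zero_apply, smul_eq_mul, Finsupp.single_apply] at h1
    norm_num [Fin.ext_iff] at h1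
    exact hσε h1
  · rw [hw2]
    simp only [Representation.tprod_apply, map_add, map_smul, TensorProduct.map_tmul,
      hεv0, hεv1, hεv2, hεw0, hεw1,
      TensorProduct.tmul_smul, ← TensorProduct.smul_tmul', smul_smul]
    match_scalars
    · linear_combination -ha3
    · linear_combination ρz * ha3
    · ring
    · ring
    · ring
    · linear_combination ρz * σε * ha3
  · rw [hw2]
    simp only [Representation.tprod_apply, map_add, map_smul, smul_add, TensorProduct.map_tmul,
      hgv0, hgv1, hgv2, hgw0, hgw1,
      TensorProduct.tmul_smul, ← TensorProduct.smul_tmul', smul_smul]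
    match_scalars
    all_goals (field_simp; try ring)
    · linear_combination ha3
    · linear_combination ha3
  · rw [hw2]
    simp only [Representation.tprod_apply, map_add, map_smul, smul_add, TensorProduct.map_tmul,
      hzv, hzw0, hzw1,
      TensorProduct.tmul_smul, ← TensorProduct.smul_tmul', smul_smul]
    match_scalars <;> ring
end

section
/- Assume char K ≠ 3, σ_ε = 1, ρ_z² σ_{g²} = 1 and ρ_g = −1. In V ⊗ W set w′ = v₂⊗w₀ − ρ_z v₁⊗w₁, and in V ⊗ (V ⊗ W) set w″ = 2 v₀⊗w′ − v₁⊗(ε·w′) − v₂⊗(ε²·w′). Then w″ and ε·w″ are linearly independent, w″ + ε·w″ + ε²·w″ = 0, g·w″ = −ρ_z⁻¹ w″ and z·w″ = ρ_z² σ_z w″. -/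
open TensorProduct

/-- For the first pair over a non-abelian epimorphic image of `Γ₃`, with `char K ≠ 3`,
`σ_ε = 1`, `ρ_z² σ_{g²} = 1` and `ρ_g = −1`, the vector
`w″ = 2 v₀⊗w′ − v₁⊗(ε·w′) − v₂⊗(ε²·w′)` and `ε·w″` are linearly independent,
`w″ + ε·w″ + ε²·w″ = 0`, and `g`, `z` act on `w″` by `−ρ_z⁻¹` and `ρ_z² σ_z`. -/
theorem first_pair_adV_sq_W_two_dim
    {K : Type*} [Field K] {G : Type*} [Group G]
    (g ε z : G) (hε : ε ≠ 1)
    (hgen : Subgroup.closure {g, ε, z} = ⊤)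
    (hrel1 : g * ε * g⁻¹ = ε ^ 2) (hrel2 : ε ^ 3 = 1)
    (hrel3 : z * g = g * z) (hrel4 : z * ε = ε * z)
    {V : Type*} [AddCommGroup V] [Module K V]
    (ρ : Representation K G V) (v : Module.Basis (Fin 3) K V)
    (ρg ρz : K) (hρg : ρg ≠ 0) (hρz : ρz ≠ 0)
    (hεv0 : ρ ε (v 0) = v 1) (hεv1 : ρ ε (v 1) = v 2) (hεv2 : ρ ε (v 2) = v 0)
    (hzv : ∀ i, ρ z (v i) = ρz • v i)
    (hgv0 : ρ g (v 0) = ρg • v 0) (hgv1 : ρ g (v 1) = ρg • v 2)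
    (hgv2 : ρ g (v 2) = ρg • v 1)
    {W : Type*} [AddCommGroup W] [Module K W]
    (σ : Representation K G W) (w : Module.Basis (Fin 2) K W)
    (σε σz σg2 : K) (hσε : σε ≠ 0) (hσz : σz ≠ 0) (hσg2 : σg2 ≠ 0)
    (hεw0 : σ ε (w 0) = σε • w 0) (hεw1 : σ ε (w 1) = σε ^ 2 • w 1)
    (hzw0 : σ z (w 0) = σz • w 0) (hzw1 : σ z (w 1) = σz • w 1)
    (hgw0 : σ g (w 0) = w 1) (hgw1 : σ g (w 1) = σg2 • w 0)
    (hchar : ringChar K ≠ 3) (hcond1 : σε = 1)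
    (hcond2 : ρz ^ 2 * σg2 = 1) (hcond3 : ρg = -1) :
    ∀ (w' : V ⊗[K] W) (w'' : V ⊗[K] (V ⊗[K] W)),
      w' = v 2 ⊗ₜ[K] w 0 - ρz • (v 1 ⊗ₜ[K] w 1) →
      w'' = (2 : K) • (v 0 ⊗ₜ[K] w') - v 1 ⊗ₜ[K] ((ρ.tprod σ) ε w') -
        v 2 ⊗ₜ[K] ((ρ.tprod σ) (ε ^ 2) w') →
      LinearIndependent K ![w'', (ρ.tprod (ρ.tprod σ)) ε w''] ∧
      w'' + (ρ.tprod (ρ.tprod σ)) ε w'' + (ρ.tprod (ρ.tprod σ)) (ε ^ 2) w'' = 0 ∧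
      (ρ.tprod (ρ.tprod σ)) g w'' = (-ρz⁻¹) • w'' ∧
      (ρ.tprod (ρ.tprod σ)) z w'' = (ρz ^ 2 * σz) • w'' := by

  intro w' w'' hw' hw''
  -- basic scalar facts
  have h3 : (3 : K) ≠ 0 := by
    intro h
    exact hchar (by
      have := (CharP.ringChar_of_prime_eq_zero (by norm_num) h)
      simpa using this)
  subst hcond1 hcond3
  have hεw0' : σ ε (w 0) = w 0 := by simpa using hεw0
  have hεw1' : σ ε (w 1) = w 1 := by simpa using hεw1
  -- ε-action on w'
  have hεw' : (ρ.tprod σ) ε w' = v 0 ⊗ₜ[K] w 0 - ρz • (v 2 ⊗ₜ[K] w 1) := by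
    subst hw'
    simp [Representation.tprod_apply, TensorProduct.map_tmul, hεv0, hεv1, hεv2,
      hεw0', hεw1']
  have hε2w' : (ρ.tprod σ) (ε ^ 2) w' = v 1 ⊗ₜ[K] w 0 - ρz • (v 0 ⊗ₜ[K] w 1) := by
    rw [map_pow, pow_two, Module.End.mul_apply, hεw']
    simp [Representation.tprod_apply, TensorProduct.map_tmul, hεv0, hεv1, hεv2,
      hεw0', hεw1']
  -- rewrite w'' fully in terms of basis tensors
  have hw2 : w'' = (2:K) • (v 0 ⊗ₜ[K] (v 2 ⊗ₜ[K] w 0)) - (2*ρz) • (v 0 ⊗ₜ[K] (v 1 ⊗ₜ[K] w 1))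
      - v 1 ⊗ₜ[K] (v 0 ⊗ₜ[K] w 0) + ρz • (v 1 ⊗ₜ[K] (v 2 ⊗ₜ[K] w 1))
      - v 2 ⊗ₜ[K] (v 1 ⊗ₜ[K] w 0) + ρz • (v 2 ⊗ₜ[K] (v 0 ⊗ₜ[K] w 1)) := by
    rw [hw'', hεw', hε2w', hw']
    simp only [TensorProduct.tmul_sub, TensorProduct.tmul_smul, smul_sub, smul_smul]
    module
  have hεw'' : (ρ.tprod (ρ.tprod σ)) ε w''
      = (2:K) • (v 1 ⊗ₜ[K] (v 0 ⊗ₜ[K] w 0)) - (2*ρz) • (v 1 ⊗ₜ[K] (v 2 ⊗ₜ[K] w 1))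
      - v 2 ⊗ₜ[K] (v 1 ⊗ₜ[K] w 0) + ρz • (v 2 ⊗ₜ[K] (v 0 ⊗ₜ[K] w 1))
      - v 0 ⊗ₜ[K] (v 2 ⊗ₜ[K] w 0) + ρz • (v 0 ⊗ₜ[K] (v 1 ⊗ₜ[K] w 1)) := by
    rw [hw2]
    simp [Representation.tprod_apply, TensorProduct.map_tmul, hεv0, hεv1, hεv2,
      hεw0', hεw1']
  refine ⟨?_, ?_, ?_, ?_⟩
  · -- linear independence
    rw [LinearIndependent.pair_iff]
    intro s t hst
    set B := v.tensorProduct (v.tensorProduct w) with hB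
    have key : ∀ i j k, B.repr (s • w'' + t • (ρ.tprod (ρ.tprod σ)) ε w'') (i, (j, k)) = 0 := by
      intro i j k; rw [hst]; simp
    have h1 := key 0 2 0
    have h2 := key 1 0 0
    rw [hεw'', hw2] at h1 h2
    simp only [map_add, map_sub, map_smul, Finsupp.add_apply, Finsupp.sub_apply,
      Finsupp.smul_apply, hB, Module.Basis.tensorProduct_repr_tmul_apply, Module.Basis.repr_self,
      Finsupp.single_apply, smul_eq_mul, Fin.ext_iff] at h1 h2
    norm_num at h1 h2
    -- h1 : 2s - t = 0, h2 : -s + 2t = 0 (up to form)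
    constructor
    · have : (3:K) * s = 0 := by linear_combination 2*h1 + h2
      exact (mul_eq_zero.1 this).resolve_left h3
    · have : (3:K) * t = 0 := by linear_combination h1 + 2*h2
      exact (mul_eq_zero.1 this).resolve_left h3
  · -- sum zero
    have hε2w'' : (ρ.tprod (ρ.tprod σ)) (ε ^ 2) w''
        = (ρ.tprod (ρ.tprod σ)) ε ((ρ.tprod (ρ.tprod σ)) ε w'') := by
      rw [map_pow, pow_two, Module.End.mul_apply]
    rw [hε2w'', hεw'', hw2]
    simp only [map_add, map_sub, map_smul, Representation.tprod_apply,
      TensorProduct.map_tmul, hεv0, hεv1, hεv2, hεw0', hεw1']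
    module
  · -- g action
    have hσg2' : σg2 = ρz⁻¹ * ρz⁻¹ := by
      field_simp
      linear_combination hcond2
    rw [hw2]
    simp only [map_add, map_sub, map_smul, Representation.tprod_apply,
      TensorProduct.map_tmul, hgv0, hgv1, hgv2, hgw0, hgw1, hσg2',
      TensorProduct.tmul_smul, ← TensorProduct.smul_tmul', smul_smul, neg_smul, one_smul,
      TensorProduct.neg_tmul, TensorProduct.tmul_neg, neg_neg, smul_neg]
    match_scalars <;> field_simp <;> ring
  · -- z action
    rw [hw2]
    simp only [map_add, map_sub, map_smul, Representation.tprod_apply,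
      TensorProduct.map_tmul, hzv, hzw0, hzw1, TensorProduct.tmul_smul,
      ← TensorProduct.smul_tmul', smul_smul]
    match_scalars <;> ring
end

section
/- Assume ρ_z² σ_ε σ_{g²} = 1 and ρ_g = −1. In W ⊗ V set v₁′ = w₀⊗v₁ − ρ_z σ_ε² w₁⊗v₂, and in W ⊗ (W ⊗ V) set v₁″ = w₀⊗(ε·v₁′) − ρ_z σ_ε σ_z w₁⊗(ε²·v₁′). Then v₁″ ≠ 0, z·v₁″ = ρ_z σ_z² v₁″, and g·v₁″ lies in K·v₁″ if and only if σ_ε σ_z² = 1; in that case g·v₁″ = −ρ_z⁻² σ_z⁻¹ v₁″. (This is the criterion for (ad W)²(V) to be absolutely simple for the first pair.) -/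
open TensorProduct

/-- Criterion for `(ad W)²(V)` to be absolutely simple for the first pair over a
non-abelian epimorphic image of `Γ₃`. -/
theorem first_pair_adW_sq_V_simple_criterion
    {K : Type*} [Field K] {G : Type*} [Group G]
    (g ε z : G) (hε : ε ≠ 1)
    (hgen : Subgroup.closure {g, ε, z} = ⊤)
    (hrel1 : g * ε * g⁻¹ = ε ^ 2) (hrel2 : ε ^ 3 = 1)
    (hrel3 : z * g = g * z) (hrel4 : z * ε = ε * z)
    {V : Type*} [AddCommGroup V] [Module K V]
    (ρ : Representation K G V) (v : Module.Basis (Fin 3) K V)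
    (ρg ρz : K) (hρg : ρg ≠ 0) (hρz : ρz ≠ 0)
    (hεv0 : ρ ε (v 0) = v 1) (hεv1 : ρ ε (v 1) = v 2) (hεv2 : ρ ε (v 2) = v 0)
    (hzv : ∀ i, ρ z (v i) = ρz • v i)
    (hgv0 : ρ g (v 0) = ρg • v 0) (hgv1 : ρ g (v 1) = ρg • v 2)
    (hgv2 : ρ g (v 2) = ρg • v 1)
    {W : Type*} [AddCommGroup W] [Module K W]
    (σ : Representation K G W) (w : Module.Basis (Fin 2) K W)
    (σε σz σg2 : K) (hσε : σε ≠ 0) (hσz : σz ≠ 0) (hσg2 : σg2 ≠ 0)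
    (hεw0 : σ ε (w 0) = σε • w 0) (hεw1 : σ ε (w 1) = σε ^ 2 • w 1)
    (hzw0 : σ z (w 0) = σz • w 0) (hzw1 : σ z (w 1) = σz • w 1)
    (hgw0 : σ g (w 0) = w 1) (hgw1 : σ g (w 1) = σg2 • w 0)
    (hcond1 : ρz ^ 2 * σε * σg2 = 1) (hcond2 : ρg = -1) :
    ∀ (v1' : W ⊗[K] V) (v1'' : W ⊗[K] (W ⊗[K] V)),
      v1' = w 0 ⊗ₜ[K] v 1 - (ρz * σε ^ 2) • (w 1 ⊗ₜ[K] v 2) →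
      v1'' = w 0 ⊗ₜ[K] ((σ.tprod ρ) ε v1') -
        (ρz * σε * σz) • (w 1 ⊗ₜ[K] ((σ.tprod ρ) (ε ^ 2) v1')) →
      v1'' ≠ 0 ∧
      (σ.tprod (σ.tprod ρ)) z v1'' = (ρz * σz ^ 2) • v1'' ∧
      ((σ.tprod (σ.tprod ρ)) g v1'' ∈
          Submodule.span K ({v1''} : Set (W ⊗[K] (W ⊗[K] V))) ↔
        σε * σz ^ 2 = 1) ∧
      (σε * σz ^ 2 = 1 →
        (σ.tprod (σ.tprod ρ)) g v1'' = (-(ρz⁻¹ ^ 2 * σz⁻¹)) • v1'') := by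
  -- σε ^ 3 = 1
  have hσε3 : σε ^ 3 = 1 := by
    have h := congrArg (fun f => f (w 0)) (congrArg σ hrel2)
    rw [map_pow, map_one, pow_succ, pow_succ, pow_one] at h
    simp only [Module.End.mul_apply, map_smul, hεw0, smul_smul, Module.End.one_apply] at h
    have h2 : (σε * (σε * σε) - 1) • w 0 = 0 := by rw [sub_smul, one_smul, h, sub_self]
    rcases smul_eq_zero.mp h2 with h4 | h4
    · linear_combination h4
    · exact absurd h4 (w.ne_zero 0)
  -- action of ε ^ 2
  have hε2w0 : σ (ε ^ 2) (w 0) = (σε * σε) • w 0 := by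
    rw [pow_two, map_mul]
    simp only [Module.End.mul_apply, hεw0, map_smul, smul_smul]
  have hε2w1 : σ (ε ^ 2) (w 1) = (σε ^ 2 * σε ^ 2) • w 1 := by
    rw [pow_two, map_mul]
    simp only [Module.End.mul_apply, hεw1, map_smul, smul_smul]
  have hε2v1 : ρ (ε ^ 2) (v 1) = v 0 := by
    rw [pow_two, map_mul]
    simp only [Module.End.mul_apply, hεv1, hεv2]
  have hε2v2 : ρ (ε ^ 2) (v 2) = v 1 := by
    rw [pow_two, map_mul]
    simp only [Module.End.mul_apply, hεv2, hεv0]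
  intro v1' v1'' h1 h2
  subst h1 h2
  set B := w.tensorProduct (w.tensorProduct v) with hBdef
  -- canonical form of v1''
  have key : w 0 ⊗ₜ[K] ((σ.tprod ρ) ε (w 0 ⊗ₜ[K] v 1 - (ρz * σε ^ 2) • (w 1 ⊗ₜ[K] v 2))) -
        (ρz * σε * σz) • (w 1 ⊗ₜ[K]
          ((σ.tprod ρ) (ε ^ 2) (w 0 ⊗ₜ[K] v 1 - (ρz * σε ^ 2) • (w 1 ⊗ₜ[K] v 2)))) =
      σε • (w 0 ⊗ₜ[K] (w 0 ⊗ₜ[K] v 2)) + (-(ρz * σε ^ 4)) • (w 0 ⊗ₜ[K] (w 1 ⊗ₜ[K] v 0))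
        + (-(ρz * σε ^ 3 * σz)) • (w 1 ⊗ₜ[K] (w 0 ⊗ₜ[K] v 0))
        + (ρz ^ 2 * σε ^ 7 * σz) • (w 1 ⊗ₜ[K] (w 1 ⊗ₜ[K] v 1)) := by
    simp only [Representation.tprod_apply, map_sub, map_smul, TensorProduct.map_tmul,
      hεw0, hεw1, hεv1, hεv2, hε2w0, hε2w1, hε2v1, hε2v2, tmul_smul, ← smul_tmul',
      tmul_sub, smul_smul, smul_sub]
    match_scalars <;> ring
  rw [key]
  set E002 := w 0 ⊗ₜ[K] (w 0 ⊗ₜ[K] v 2) with hE002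
  set E010 := w 0 ⊗ₜ[K] (w 1 ⊗ₜ[K] v 0) with hE010
  set E100 := w 1 ⊗ₜ[K] (w 0 ⊗ₜ[K] v 0) with hE100
  set E111 := w 1 ⊗ₜ[K] (w 1 ⊗ₜ[K] v 1) with hE111
  have keyg : (σ.tprod (σ.tprod ρ)) g
        (σε • E002 + (-(ρz * σε ^ 4)) • E010 + (-(ρz * σε ^ 3 * σz)) • E100
          + (ρz ^ 2 * σε ^ 7 * σz) • E111) =
      (-(ρz ^ 2 * σε ^ 7 * σz * σg2 ^ 2)) • E002 + (ρz * σε ^ 3 * σz * σg2) • E010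
        + (ρz * σε ^ 4 * σg2) • E100 + (-σε) • E111 := by
    simp only [hE002, hE010, hE100, hE111, Representation.tprod_apply, map_sub, map_add,
      map_smul, TensorProduct.map_tmul, hgw0, hgw1, hgv0, hgv1, hgv2, hcond2,
      tmul_smul, ← smul_tmul', tmul_sub, smul_smul]
    match_scalars <;> ring
  have keyz : (σ.tprod (σ.tprod ρ)) z
        (σε • E002 + (-(ρz * σε ^ 4)) • E010 + (-(ρz * σε ^ 3 * σz)) • E100
          + (ρz ^ 2 * σε ^ 7 * σz) • E111) =
      (ρz * σz ^ 2) • (σε • E002 + (-(ρz * σε ^ 4)) • E010 + (-(ρz * σε ^ 3 * σz)) • E100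
          + (ρz ^ 2 * σε ^ 7 * σz) • E111) := by
    simp only [hE002, hE010, hE100, hE111, Representation.tprod_apply, map_sub, map_add,
      map_smul, TensorProduct.map_tmul, hzw0, hzw1, hzv,
      tmul_smul, ← smul_tmul', tmul_sub, smul_smul, smul_sub, smul_add]
    match_scalars <;> ring
  -- coordinates
  have rAt : ∀ (a b c d : K) (p : Fin 2 × Fin 2 × Fin 3),
      B.repr (a • E002 + b • E010 + c • E100 + d • E111) p =
        a * B.repr E002 p + b * B.repr E010 p + c * B.repr E100 p + d * B.repr E111 p := by
    intro a b c d p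
    simp [map_add, map_smul]
  have r1 : ∀ a b c d : K, B.repr (a • E002 + b • E010 + c • E100 + d • E111) (0, (0, 2)) = a := by
    intro a b c d
    rw [rAt]
    simp [hE002, hE010, hE100, hE111, hBdef, Module.Basis.tensorProduct_repr_tmul_apply,
      Module.Basis.repr_self, Finsupp.single_apply]
  have r2 : ∀ a b c d : K, B.repr (a • E002 + b • E010 + c • E100 + d • E111) (0, (1, 0)) = b := by
    intro a b c d
    rw [rAt]
    simp [hE002, hE010, hE100, hE111, hBdef, Module.Basis.tensorProduct_repr_tmul_apply,
      Module.Basis.repr_self, Finsupp.single_apply]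
  have r3 : ∀ a b c d : K, B.repr (a • E002 + b • E010 + c • E100 + d • E111) (1, (0, 0)) = c := by
    intro a b c d
    rw [rAt]
    simp [hE002, hE010, hE100, hE111, hBdef, Module.Basis.tensorProduct_repr_tmul_apply,
      Module.Basis.repr_self, Finsupp.single_apply, ← Prod.mk_zero_zero]
  have hlast : σε * σz ^ 2 = 1 →
      (σ.tprod (σ.tprod ρ)) g
        (σε • E002 + (-(ρz * σε ^ 4)) • E010 + (-(ρz * σε ^ 3 * σz)) • E100
          + (ρz ^ 2 * σε ^ 7 * σz) • E111) =
      (-(ρz⁻¹ ^ 2 * σz⁻¹)) • (σε • E002 + (-(ρz * σε ^ 4)) • E010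
          + (-(ρz * σε ^ 3 * σz)) • E100 + (ρz ^ 2 * σε ^ 7 * σz) • E111) := by
    intro hs
    have h' : σε * σz ^ 2 = σε * σε ^ 2 := by rw [hs, ← hσε3]; ring
    have hσz2 : σz ^ 2 = σε ^ 2 := mul_left_cancel₀ hσε h'
    have hg2sq : ρz ^ 4 * σε ^ 2 * σg2 ^ 2 = 1 := by
      linear_combination (ρz ^ 2 * σε * σg2 + 1) * hcond1
    rw [keyg]
    match_scalars
    · field_simp
      linear_combination σε ^ 5 * σz ^ 2 * hg2sq + σε ^ 5 * hσz2 + σε * (σε ^ 3 + 1) * hσε3 + (-(σε ^ 4 + σε ^ 5) * σz ^ 2) * hg2sq - (σε ^ 4 + σε ^ 5) * hσz2 - (1 + σε) * (σε ^ 3 + 1) * hσε3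
    · field_simp
      linear_combination ρz * σε ^ 2 * σz ^ 2 * hcond1 + ρz * σε ^ 2 * hσz2 + (ρz ^ 2 * σg2 - ρz ^ 3 * σg2 * σε ^ 3) * hσz2 + (σε - ρz * σε ^ 4) * hcond1
    · field_simp
      linear_combination ρz * σε ^ 3 * σz * hcond1 + (1 - ρz * σε ^ 3 * σz) * hcond1
    · field_simp
      linear_combination (-(ρz ^ 2 * σz * σε) * (σε ^ 3 + 1)) * hσε3 + ((σε ^ 3 + 1) * (1 + ρz ^ 2 * σz * σε)) * hσε3
  refine ⟨?_, keyz, ⟨?_, fun hs => ?_⟩, hlast⟩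
  · intro h0
    have hr := r1 σε (-(ρz * σε ^ 4)) (-(ρz * σε ^ 3 * σz)) (ρz ^ 2 * σε ^ 7 * σz)
    rw [h0, map_zero] at hr
    simp only [Finsupp.coe_zero, Pi.zero_apply] at hr
    exact hσε hr.symm
  · intro hmem
    rw [Submodule.mem_span_singleton] at hmem
    obtain ⟨c, hc⟩ := hmem
    rw [keyg] at hc
    have hc2 : (c * σε) • E002 + (c * (-(ρz * σε ^ 4))) • E010
        + (c * (-(ρz * σε ^ 3 * σz))) • E100 + (c * (ρz ^ 2 * σε ^ 7 * σz)) • E111 =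
        (-(ρz ^ 2 * σε ^ 7 * σz * σg2 ^ 2)) • E002 + (ρz * σε ^ 3 * σz * σg2) • E010
        + (ρz * σε ^ 4 * σg2) • E100 + (-σε) • E111 := by
      rw [← hc]; match_scalars <;> ring
    have e2 := congrArg (fun x => B.repr x (0, (1, 0))) hc2
    rw [r2, r2] at e2
    have e3 := congrArg (fun x => B.repr x (1, (0, 0))) hc2
    rw [r3, r3] at e3
    have h9 : ρz * σε ^ 3 * σg2 * σz ^ 2 = ρz * σε ^ 3 * σg2 * σε ^ 2 := by
      linear_combination σε * e3 - σz * e2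
    have hσz2 := mul_left_cancel₀
      (mul_ne_zero (mul_ne_zero hρz (pow_ne_zero 3 hσε)) hσg2) h9
    linear_combination σε * hσz2 + hσε3
  · rw [Submodule.mem_span_singleton]
    exact ⟨-(ρz⁻¹ ^ 2 * σz⁻¹), (hlast hs).symm⟩
end

section
/- Assume ρ_z² σ_ε σ_{g²} = 1, ρ_g = −1, σ_ε σ_z ≠ −1 and σ_ε σ_z² = 1. Define recursively y₀ = v₀ ∈ V and yₙ = w₀⊗(ε·yₙ₋₁) − ρ_z σ_z^{3n−1} w₁⊗(ε²·yₙ₋₁) ∈ W^{⊗n} ⊗ V for n ≥ 1. Then for every n ≥ 1 one has yₙ ≠ 0, z·yₙ = ρ_z σ_zⁿ yₙ and g·yₙ = (−1)^{n+1} ρ_z^{−n} σ_z^{n(3n+5)/2} yₙ. -/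
open TensorProduct

universe u₁ u₂ u₃

/-- A bundled `K`-linear representation of `G`. -/
structure GRep (K : Type u₁) (G : Type u₂) [CommSemiring K] [Monoid G] where
  carrier : Type u₃
  [isAddCommGroup : AddCommGroup carrier]
  [isModule : Module K carrier]
  rep : Representation K G carrier

attribute [instance] GRep.isAddCommGroup GRep.isModule

/-- Tensor product of bundled representations, with the diagonal action. -/
noncomputable def GRep.tprod {K : Type u₁} {G : Type u₂} [CommSemiring K] [Monoid G]
    (A B : GRep.{u₁, u₂, u₃} K G) : GRep.{u₁, u₂, u₃} K G where
  carrier := A.carrier ⊗[K] B.carrier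
  rep := A.rep.tprod B.rep

/-- The iterated tensor product `B^{⊗n} ⊗ A` with the diagonal action. -/
noncomputable def GRep.powTensor {K : Type u₁} {G : Type u₂} [CommSemiring K] [Monoid G]
    (B A : GRep.{u₁, u₂, u₃} K G) : ℕ → GRep.{u₁, u₂, u₃} K G
  | 0 => A
  | n + 1 => B.tprod (GRep.powTensor B A n)

/-- For the first pair over a non-abelian epimorphic image of `Γ₃`, with
`ρ_z² σ_ε σ_{g²} = 1`, `ρ_g = −1`, `σ_ε σ_z ≠ −1` and `σ_ε σ_z² = 1`, the recursively
defined vectors `yₙ ∈ W^{⊗n} ⊗ V` satisfy, for all `n ≥ 1`: `yₙ ≠ 0`,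
`z·yₙ = ρ_z σ_zⁿ yₙ` and `g·yₙ = (−1)^{n+1} ρ_z^{−n} σ_z^{n(3n+5)/2} yₙ`. -/
theorem first_pair_adW_pow_V
    {K : Type u₁} [Field K] {G : Type u₂} [Group G]
    (g ε z : G) (hε : ε ≠ 1)
    (hgen : Subgroup.closure {g, ε, z} = ⊤)
    (hrel1 : g * ε * g⁻¹ = ε ^ 2) (hrel2 : ε ^ 3 = 1)
    (hrel3 : z * g = g * z) (hrel4 : z * ε = ε * z)
    {V : Type u₃} [AddCommGroup V] [Module K V]
    (ρ : Representation K G V) (v : Module.Basis (Fin 3) K V)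
    (ρg ρz : K) (hρg : ρg ≠ 0) (hρz : ρz ≠ 0)
    (hεv0 : ρ ε (v 0) = v 1) (hεv1 : ρ ε (v 1) = v 2) (hεv2 : ρ ε (v 2) = v 0)
    (hzv : ∀ i, ρ z (v i) = ρz • v i)
    (hgv0 : ρ g (v 0) = ρg • v 0) (hgv1 : ρ g (v 1) = ρg • v 2)
    (hgv2 : ρ g (v 2) = ρg • v 1)
    {W : Type u₃} [AddCommGroup W] [Module K W]
    (σ : Representation K G W) (w : Module.Basis (Fin 2) K W)
    (σε σz σg2 : K) (hσε : σε ≠ 0) (hσz : σz ≠ 0) (hσg2 : σg2 ≠ 0)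
    (hεw0 : σ ε (w 0) = σε • w 0) (hεw1 : σ ε (w 1) = σε ^ 2 • w 1)
    (hzw0 : σ z (w 0) = σz • w 0) (hzw1 : σ z (w 1) = σz • w 1)
    (hgw0 : σ g (w 0) = w 1) (hgw1 : σ g (w 1) = σg2 • w 0)
    (hcond1 : ρz ^ 2 * σε * σg2 = 1) (hcond2 : ρg = -1)
    (hcond3 : σε * σz ≠ -1) (hcond4 : σε * σz ^ 2 = 1)
    (y : (n : ℕ) → (GRep.powTensor (GRep.mk W σ) (GRep.mk V ρ) n).carrier)
    (hy0 : y 0 = v 0)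
    (hyrec : ∀ n : ℕ, y (n + 1) =
      w 0 ⊗ₜ[K] ((GRep.powTensor (GRep.mk W σ) (GRep.mk V ρ) n).rep ε (y n)) -
        (ρz * σz ^ (3 * (n + 1) - 1)) •
          (w 1 ⊗ₜ[K]
            ((GRep.powTensor (GRep.mk W σ) (GRep.mk V ρ) n).rep (ε ^ 2) (y n)))) :
    ∀ n : ℕ, 1 ≤ n →
      y n ≠ 0 ∧
      (GRep.powTensor (GRep.mk W σ) (GRep.mk V ρ) n).rep z (y n) =
        (ρz * σz ^ n) • y n ∧
      (GRep.powTensor (GRep.mk W σ) (GRep.mk V ρ) n).rep g (y n) =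
        ((-1 : K) ^ (n + 1) * ρz⁻¹ ^ n * σz ^ (n * (3 * n + 5) / 2)) • y n := by
  -- group identities
  have hgε : g * ε = ε ^ 2 * g := by
    rw [← hrel1]; group
  have hgε2 : g * ε ^ 2 = ε * g := by
    have h1 : g * ε ^ 2 = (g * ε) * ε := by rw [pow_two, mul_assoc]
    rw [h1, hgε, mul_assoc, hgε, ← mul_assoc, ← pow_add]
    have h2 : ε ^ 4 = ε ^ 3 * ε := by group
    rw [show (2+2 : ℕ) = 4 from rfl, h2, hrel2, one_mul]
  have hzε2 : z * ε ^ 2 = ε ^ 2 * z := by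
    rw [pow_two, ← mul_assoc, hrel4, mul_assoc, hrel4, ← mul_assoc]
  -- eigenvalue of ε powers on w 0
  have hεpow : ∀ m : ℕ, σ (ε ^ m) (w 0) = σε ^ m • w 0 := by
    intro m
    induction m with
    | zero => simp
    | succ k ih =>
      rw [pow_succ, pow_succ, map_mul, Module.End.mul_apply, hεw0, map_smul, ih,
        smul_smul, mul_comm]
  have hσε3 : σε ^ 3 = 1 := by
    have h1 := hεpow 3
    rw [hrel2, map_one, Module.End.one_apply] at h1
    have h2 : (σε ^ 3 - 1) • (w 0) = 0 := by
      rw [sub_smul, one_smul, ← h1, sub_self]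
    rcases smul_eq_zero.mp h2 with h | h
    · exact sub_eq_zero.mp h
    · exact absurd h (w.ne_zero 0)
  have hσz6 : σz ^ 6 = 1 := by
    have h : (σε * σz ^ 2) ^ 3 = 1 := by rw [hcond4, one_pow]
    calc σz ^ 6 = σε ^ 3 * σz ^ 6 := by rw [hσε3, one_mul]
    _ = (σε * σz ^ 2) ^ 3 := by ring
    _ = 1 := h
  have hkey1 : ρz ^ 2 * σg2 = σz ^ 2 := by
    apply mul_left_cancel₀ hσε
    linear_combination hcond1.trans hcond4.symm
  have hu : ρz * ρz⁻¹ = 1 := mul_inv_cancel₀ hρz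
  have hnat : ∀ n : ℕ, (n+1)*(3*(n+1)+5)/2 = n*(3*n+5)/2 + (3*n+4) := by
    intro n
    have h : (n+1)*(3*(n+1)+5) = n*(3*n+5) + (3*n+4)*2 := by ring
    rw [h, Nat.add_mul_div_right _ _ (by norm_num : 0 < 2)]
  have hrep_succ : ∀ (n : ℕ) (x : G) (u : W) (t : (GRep.powTensor (GRep.mk W σ) (GRep.mk V ρ) n).carrier),
      (GRep.powTensor (GRep.mk W σ) (GRep.mk V ρ) (n+1)).rep x (u ⊗ₜ[K] t) = (σ x u) ⊗ₜ[K] ((GRep.powTensor (GRep.mk W σ) (GRep.mk V ρ) n).rep x t) := fun n x u t => rfl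
  have key : ∀ n : ℕ, y n ≠ 0 ∧ (GRep.powTensor (GRep.mk W σ) (GRep.mk V ρ) n).rep z (y n) = (ρz * σz ^ n) • y n ∧
      (GRep.powTensor (GRep.mk W σ) (GRep.mk V ρ) n).rep g (y n) = ((-1:K)^(n+1) * ρz⁻¹^n * σz^(n*(3*n+5)/2)) • y n := by
    intro n
    induction n with
    | zero =>
      refine ⟨?_, ?_, ?_⟩
      · rw [hy0]; exact v.ne_zero 0
      · show ρ z (y 0) = _
        rw [hy0, hzv 0]; norm_num; rfl
      · show ρ g (y 0) = _
        rw [hy0, hgv0, hcond2]; norm_num; exact (neg_one_smul K (v 0)).symm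
    | succ n ih =>
      obtain ⟨hne, hz, hg⟩ := ih
      have h32 : 3*(n+1)-1 = 3*n+2 := by omega
      have hyr : y (n+1) = w 0 ⊗ₜ[K] ((GRep.powTensor (GRep.mk W σ) (GRep.mk V ρ) n).rep ε (y n)) -
          (ρz * σz ^ (3*n+2)) • (w 1 ⊗ₜ[K] ((GRep.powTensor (GRep.mk W σ) (GRep.mk V ρ) n).rep (ε ^ 2) (y n))) := by
        rw [hyrec n, h32]
      have hanz : (GRep.powTensor (GRep.mk W σ) (GRep.mk V ρ) n).rep ε (y n) ≠ 0 := by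
        intro h0
        apply hne
        have h1 : (GRep.powTensor (GRep.mk W σ) (GRep.mk V ρ) n).rep ε⁻¹ ((GRep.powTensor (GRep.mk W σ) (GRep.mk V ρ) n).rep ε (y n)) = y n := by
          rw [← Module.End.mul_apply, ← map_mul, inv_mul_cancel, map_one,
            Module.End.one_apply]
        rw [← h1, h0, map_zero]
      have hynz : y (n+1) ≠ 0 := by
        intro h0
        have hLy : ((TensorProduct.lid K (GRep.powTensor (GRep.mk W σ) (GRep.mk V ρ) n).carrier).toLinearMap ∘ₗ
            LinearMap.rTensor (GRep.powTensor (GRep.mk W σ) (GRep.mk V ρ) n).carrier (w.coord 0)) (y (n+1)) =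
            (GRep.powTensor (GRep.mk W σ) (GRep.mk V ρ) n).rep ε (y n) := by
          rw [hyr]
          simp [LinearMap.rTensor_tmul, TensorProduct.lid_tmul, Module.Basis.coord_apply]
        erw [h0, map_zero] at hLy
        exact hanz hLy.symm
      have hza : (GRep.powTensor (GRep.mk W σ) (GRep.mk V ρ) n).rep z ((GRep.powTensor (GRep.mk W σ) (GRep.mk V ρ) n).rep ε (y n)) =
          (ρz * σz ^ n) • ((GRep.powTensor (GRep.mk W σ) (GRep.mk V ρ) n).rep ε (y n)) := by
        rw [← Module.End.mul_apply, ← map_mul, hrel4, map_mul, Module.End.mul_apply,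
          hz, map_smul]
      have hzb : (GRep.powTensor (GRep.mk W σ) (GRep.mk V ρ) n).rep z ((GRep.powTensor (GRep.mk W σ) (GRep.mk V ρ) n).rep (ε ^ 2) (y n)) =
          (ρz * σz ^ n) • ((GRep.powTensor (GRep.mk W σ) (GRep.mk V ρ) n).rep (ε ^ 2) (y n)) := by
        rw [← Module.End.mul_apply, ← map_mul, hzε2, map_mul, Module.End.mul_apply,
          hz, map_smul]
      have hga : (GRep.powTensor (GRep.mk W σ) (GRep.mk V ρ) n).rep g ((GRep.powTensor (GRep.mk W σ) (GRep.mk V ρ) n).rep ε (y n)) =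
          ((-1:K)^(n+1) * ρz⁻¹^n * σz^(n*(3*n+5)/2)) • ((GRep.powTensor (GRep.mk W σ) (GRep.mk V ρ) n).rep (ε ^ 2) (y n)) := by
        rw [← Module.End.mul_apply, ← map_mul, hgε, map_mul, Module.End.mul_apply,
          hg, map_smul]
      have hgb : (GRep.powTensor (GRep.mk W σ) (GRep.mk V ρ) n).rep g ((GRep.powTensor (GRep.mk W σ) (GRep.mk V ρ) n).rep (ε ^ 2) (y n)) =
          ((-1:K)^(n+1) * ρz⁻¹^n * σz^(n*(3*n+5)/2)) • ((GRep.powTensor (GRep.mk W σ) (GRep.mk V ρ) n).rep ε (y n)) := by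
        rw [← Module.End.mul_apply, ← map_mul, hgε2, map_mul, Module.End.mul_apply,
          hg, map_smul]
      refine ⟨hynz, ?_, ?_⟩
      · have goal' : TensorProduct.map (σ z) ((GRep.powTensor (GRep.mk W σ) (GRep.mk V ρ) n).rep z) (w 0 ⊗ₜ[K] ((GRep.powTensor (GRep.mk W σ) (GRep.mk V ρ) n).rep ε (y n)) - (ρz * σz ^ (3*n+2)) • (w 1 ⊗ₜ[K] ((GRep.powTensor (GRep.mk W σ) (GRep.mk V ρ) n).rep (ε ^ 2) (y n)))) = (ρz * σz ^ (n+1)) • (w 0 ⊗ₜ[K] ((GRep.powTensor (GRep.mk W σ) (GRep.mk V ρ) n).rep ε (y n)) - (ρz * σz ^ (3*n+2)) • (w 1 ⊗ₜ[K] ((GRep.powTensor (GRep.mk W σ) (GRep.mk V ρ) n).rep (ε ^ 2) (y n)))) := by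
          rw [map_sub, map_smul, TensorProduct.map_tmul, TensorProduct.map_tmul, hzw0, hzw1, hza, hzb]
          simp only [TensorProduct.tmul_smul, ← TensorProduct.smul_tmul']
          match_scalars <;> ring
        rw [hyr]; exact goal'
      · rw [hyr, hnat n]
        refine (?_ : TensorProduct.map (σ g) ((GRep.powTensor (GRep.mk W σ) (GRep.mk V ρ) n).rep g) (w 0 ⊗ₜ[K] ((GRep.powTensor (GRep.mk W σ) (GRep.mk V ρ) n).rep ε (y n)) - (ρz * σz ^ (3*n+2)) • (w 1 ⊗ₜ[K] ((GRep.powTensor (GRep.mk W σ) (GRep.mk V ρ) n).rep (ε ^ 2) (y n)))) = ((-1:K)^(n+1+1) * ρz⁻¹^(n+1) * σz^(n*(3*n+5)/2 + (3*n+4))) • (w 0 ⊗ₜ[K] ((GRep.powTensor (GRep.mk W σ) (GRep.mk V ρ) n).rep ε (y n)) - (ρz * σz ^ (3*n+2)) • (w 1 ⊗ₜ[K] ((GRep.powTensor (GRep.mk W σ) (GRep.mk V ρ) n).rep (ε ^ 2) (y n)))))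
        rw [map_sub, map_smul, TensorProduct.map_tmul, TensorProduct.map_tmul, hgw0, hgw1, hga, hgb]
        simp only [TensorProduct.tmul_smul, ← TensorProduct.smul_tmul']
        have h66 : σz^(3*n+4) * σz^(3*n+2) = 1 := by
          rw [← pow_add, show 3*n+4 + (3*n+2) = 6*(n+1) by ring, pow_mul, hσz6, one_pow]
        match_scalars
        · linear_combination
            (-(((-1:K)^(n+1) * ρz⁻¹^n * σz^(n*(3*n+5)/2))*σz^(3*n+4)*σz^(3*n+2))) * hu +
            (-((-1:K)^(n+1) * ρz⁻¹^n * σz^(n*(3*n+5)/2))) * h66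
        · linear_combination
            (-(((-1:K)^(n+1) * ρz⁻¹^n * σz^(n*(3*n+5)/2))*ρz⁻¹*σz^(3*n+2))) * hkey1 +
            (((-1:K)^(n+1) * ρz⁻¹^n * σz^(n*(3*n+5)/2))*ρz*σg2*σz^(3*n+2)) * hu
  intro n hn
  exact key n
end

section
/- Assume 1 + σ_ε + σ_ε² = 0. In V ⊗ W let w′ = v₀⊗(w₀ − ρ_z w₁). Then w′ ≠ 0, the vectors w′, ε·w′, ε²·w′ are linearly independent, z·w′ = ρ_z σ_z w′, and g·w′ lies in K·w′ if and only if ρ_z² σ_{g²} = 1; in that case g·w′ = −ρ_g ρ_z⁻¹ w′. (This is the criterion for (ad V)(W) to be simple for the second pair, where W corresponds to a two-dimensional irreducible representation of G.) -/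
open TensorProduct

set_option maxHeartbeats 2000000

/-- Criterion for `(ad V)(W)` to be simple for the second pair over a non-abelian
epimorphic image of `Γ₃`, where `W` corresponds to a two-dimensional irreducible
representation of `G`. -/
theorem second_pair_adV_W_simple_criterion
    {K : Type*} [Field K] {G : Type*} [Group G]
    (g ε z : G) (hε : ε ≠ 1)
    (hgen : Subgroup.closure {g, ε, z} = ⊤)
    (hrel1 : g * ε * g⁻¹ = ε ^ 2) (hrel2 : ε ^ 3 = 1)
    (hrel3 : z * g = g * z) (hrel4 : z * ε = ε * z)
    {V : Type*} [AddCommGroup V] [Module K V]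
    (ρ : Representation K G V) (v : Module.Basis (Fin 3) K V)
    (ρg ρz : K) (hρg : ρg ≠ 0) (hρz : ρz ≠ 0)
    (hεv0 : ρ ε (v 0) = v 1) (hεv1 : ρ ε (v 1) = v 2) (hεv2 : ρ ε (v 2) = v 0)
    (hzv : ∀ i, ρ z (v i) = ρz • v i)
    (hgv0 : ρ g (v 0) = ρg • v 0) (hgv1 : ρ g (v 1) = ρg • v 2)
    (hgv2 : ρ g (v 2) = ρg • v 1)
    {W : Type*} [AddCommGroup W] [Module K W]
    (σ : Representation K G W) (w : Module.Basis (Fin 2) K W)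
    (σε σz σg2 : K) (hσε : σε ≠ 0) (hσz : σz ≠ 0) (hσg2 : σg2 ≠ 0)
    (hεw0 : σ ε (w 0) = σε • w 0) (hεw1 : σ ε (w 1) = σε ^ 2 • w 1)
    (hzw0 : σ z (w 0) = σz • w 0) (hzw1 : σ z (w 1) = σz • w 1)
    (hgw0 : σ g (w 0) = w 1) (hgw1 : σ g (w 1) = σg2 • w 0)
    (hcond : 1 + σε + σε ^ 2 = 0) :
    ∀ w' : V ⊗[K] W,
      w' = v 0 ⊗ₜ[K] (w 0 - ρz • w 1) →
      w' ≠ 0 ∧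
      LinearIndependent K ![w', (ρ.tprod σ) ε w', (ρ.tprod σ) (ε ^ 2) w'] ∧
      (ρ.tprod σ) z w' = (ρz * σz) • w' ∧
      ((ρ.tprod σ) g w' ∈ Submodule.span K ({w'} : Set (V ⊗[K] W)) ↔
        ρz ^ 2 * σg2 = 1) ∧
      (ρz ^ 2 * σg2 = 1 → (ρ.tprod σ) g w' = (-(ρg * ρz⁻¹)) • w') := by
  intro w' hw'
  subst hw'
  set B := Module.Basis.tensorProduct v w with hB
  have hrep : ∀ (x : V) (y : W) (i : Fin 3) (j : Fin 2),
      B.repr (x ⊗ₜ[K] y) (i, j) = w.repr y j * v.repr x i := by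
    intro x y i j
    simp [hB, smul_eq_mul]
  have hεε : (ρ.tprod σ) (ε ^ 2) (v 0 ⊗ₜ[K] (w 0 - ρz • w 1))
      = (ρ.tprod σ) ε ((ρ.tprod σ) ε (v 0 ⊗ₜ[K] (w 0 - ρz • w 1))) := by
    rw [pow_two, map_mul, Module.End.mul_apply]
  have h5 : ρz ^ 2 * σg2 = 1 →
      (ρ.tprod σ) g (v 0 ⊗ₜ[K] (w 0 - ρz • w 1))
        = (-(ρg * ρz⁻¹)) • (v 0 ⊗ₜ[K] (w 0 - ρz • w 1)) := by
    intro h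
    apply B.repr.injective
    ext ⟨i, j⟩
    fin_cases i <;> fin_cases j <;>
      simp [Representation.tprod_apply, TensorProduct.map_tmul, map_sub, map_smul,
        hgv0, hgw0, hgw1, TensorProduct.tmul_sub, TensorProduct.tmul_smul,
        TensorProduct.smul_tmul', hrep, Finsupp.sub_apply, Finsupp.smul_apply,
        Module.Basis.repr_self, Finsupp.single_apply, smul_eq_mul] <;>
      field_simp <;> grind
  refine ⟨?_, ?_, ?_, ?_, h5⟩
  · intro h
    have h0 := congrArg (fun x => B.repr x (0,0)) h
    simp [TensorProduct.tmul_sub, TensorProduct.tmul_smul, TensorProduct.smul_tmul',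
      map_sub, map_smul, hrep, Module.Basis.repr_self, Finsupp.single_apply,
      Finsupp.sub_apply, Finsupp.smul_apply, smul_eq_mul] at h0
  · rw [Fintype.linearIndependent_iff]
    intro c hc
    rw [hεε] at hc
    have h0 := congrArg (fun x => B.repr x (0,0)) hc
    have h1 := congrArg (fun x => B.repr x (1,0)) hc
    have h2 := congrArg (fun x => B.repr x (2,0)) hc
    simp [Fin.sum_univ_three, Representation.tprod_apply, TensorProduct.map_tmul,
      map_sub, map_smul, map_add, hεv0, hεv1, hεw0, hεw1,
      TensorProduct.tmul_sub, TensorProduct.tmul_smul, TensorProduct.smul_tmul',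
      hrep, Finsupp.sub_apply, Finsupp.smul_apply, Finsupp.add_apply,
      Module.Basis.repr_self, Finsupp.single_apply, smul_eq_mul,
      mul_eq_zero, hσε] at h0 h1 h2
    intro i
    fin_cases i <;> assumption
  · apply B.repr.injective
    ext ⟨i, j⟩
    fin_cases i <;> fin_cases j <;>
      simp [Representation.tprod_apply, TensorProduct.map_tmul, map_sub, map_smul,
        hzv, hzw0, hzw1, TensorProduct.tmul_sub, TensorProduct.tmul_smul,
        TensorProduct.smul_tmul', hrep, Finsupp.sub_apply, Finsupp.smul_apply,
        Module.Basis.repr_self, Finsupp.single_apply, smul_eq_mul] <;> ring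
  · rw [Submodule.mem_span_singleton]
    constructor
    · rintro ⟨c, hcA⟩
      have h0 := congrArg (fun x => B.repr x (0,0)) hcA
      have h1 := congrArg (fun x => B.repr x (0,1)) hcA
      simp [Representation.tprod_apply, TensorProduct.map_tmul, map_sub, map_smul,
        hgv0, hgw0, hgw1, TensorProduct.tmul_sub, TensorProduct.tmul_smul,
        TensorProduct.smul_tmul', hrep, Finsupp.sub_apply, Finsupp.smul_apply,
        Module.Basis.repr_self, Finsupp.single_apply, smul_eq_mul] at h0 h1
      rw [h0] at h1
      apply mul_left_cancel₀ hρg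
      linear_combination h1
    · intro h
      exact ⟨-(ρg * ρz⁻¹), (h5 h).symm⟩
end

section
/- Assume 1 + σ_ε + σ_ε² = 0, ρ_z² σ_{g²} = 1 and ρ_g = −1. In V ⊗ W set w′ = v₀⊗(w₀ − ρ_z w₁), and in V ⊗ (V ⊗ W) set w″ = v₂⊗w′ + ρ_g² v₀⊗(ε·w′) − ρ_g v₁⊗(ε²·w′). Then w″ ≠ 0, the vectors w″ and g·w″ are linearly independent, ε·w″ = w″, g²·w″ = ρ_z⁻² w″ and z·w″ = ρ_z² σ_z w″. -/
open TensorProduct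

/-- For the second pair over a non-abelian epimorphic image of `Γ₃`, with
`1 + σ_ε + σ_ε² = 0`, `ρ_z² σ_{g²} = 1` and `ρ_g = −1`, the vector
`w″ = v₂⊗w′ + ρ_g² v₀⊗(ε·w′) − ρ_g v₁⊗(ε²·w′)` is non-zero, `w″` and `g·w″` are
linearly independent, `ε·w″ = w″`, `g²·w″ = ρ_z⁻² w″` and `z·w″ = ρ_z² σ_z w″`. -/
theorem second_pair_adV_sq_W
    {K : Type*} [Field K] {G : Type*} [Group G]
    (g ε z : G) (hε : ε ≠ 1)
    (hgen : Subgroup.closure {g, ε, z} = ⊤)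
    (hrel1 : g * ε * g⁻¹ = ε ^ 2) (hrel2 : ε ^ 3 = 1)
    (hrel3 : z * g = g * z) (hrel4 : z * ε = ε * z)
    {V : Type*} [AddCommGroup V] [Module K V]
    (ρ : Representation K G V) (v : Module.Basis (Fin 3) K V)
    (ρg ρz : K) (hρg : ρg ≠ 0) (hρz : ρz ≠ 0)
    (hεv0 : ρ ε (v 0) = v 1) (hεv1 : ρ ε (v 1) = v 2) (hεv2 : ρ ε (v 2) = v 0)
    (hzv : ∀ i, ρ z (v i) = ρz • v i)
    (hgv0 : ρ g (v 0) = ρg • v 0) (hgv1 : ρ g (v 1) = ρg • v 2)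
    (hgv2 : ρ g (v 2) = ρg • v 1)
    {W : Type*} [AddCommGroup W] [Module K W]
    (σ : Representation K G W) (w : Module.Basis (Fin 2) K W)
    (σε σz σg2 : K) (hσε : σε ≠ 0) (hσz : σz ≠ 0) (hσg2 : σg2 ≠ 0)
    (hεw0 : σ ε (w 0) = σε • w 0) (hεw1 : σ ε (w 1) = σε ^ 2 • w 1)
    (hzw0 : σ z (w 0) = σz • w 0) (hzw1 : σ z (w 1) = σz • w 1)
    (hgw0 : σ g (w 0) = w 1) (hgw1 : σ g (w 1) = σg2 • w 0)
    (hcond1 : 1 + σε + σε ^ 2 = 0) (hcond2 : ρz ^ 2 * σg2 = 1)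
    (hcond3 : ρg = -1) :
    ∀ (w' : V ⊗[K] W) (w'' : V ⊗[K] (V ⊗[K] W)),
      w' = v 0 ⊗ₜ[K] (w 0 - ρz • w 1) →
      w'' = v 2 ⊗ₜ[K] w' + ρg ^ 2 • (v 0 ⊗ₜ[K] ((ρ.tprod σ) ε w')) -
        ρg • (v 1 ⊗ₜ[K] ((ρ.tprod σ) (ε ^ 2) w')) →
      w'' ≠ 0 ∧
      LinearIndependent K ![w'', (ρ.tprod (ρ.tprod σ)) g w''] ∧
      (ρ.tprod (ρ.tprod σ)) ε w'' = w'' ∧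
      (ρ.tprod (ρ.tprod σ)) (g ^ 2) w'' = ρz⁻¹ ^ 2 • w'' ∧
      (ρ.tprod (ρ.tprod σ)) z w'' = (ρz ^ 2 * σz) • w'' := by
  intro w' w'' hw' hw''
  subst hw' hcond3
  have hε3 : σε ^ 3 = 1 := by linear_combination (σε - 1) * hcond1
  set b : Module.Basis (Fin 3 × Fin 3 × Fin 2) K (V ⊗[K] (V ⊗[K] W)) :=
    v.tensorProduct (v.tensorProduct w) with hb
  have key : w'' = v 2 ⊗ₜ (v 0 ⊗ₜ w 0) - ρz • v 2 ⊗ₜ (v 0 ⊗ₜ w 1)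
      + σε • v 0 ⊗ₜ (v 1 ⊗ₜ w 0) - (ρz * σε ^ 2) • v 0 ⊗ₜ (v 1 ⊗ₜ w 1)
      + σε ^ 2 • v 1 ⊗ₜ (v 2 ⊗ₜ w 0) - (ρz * σε) • v 1 ⊗ₜ (v 2 ⊗ₜ w 1) := by
    rw [hw'']
    simp only [pow_two, map_mul, Representation.tprod_apply, Module.End.mul_apply,
      TensorProduct.map_tmul, map_sub, map_smul, tmul_sub, sub_tmul, tmul_smul,
      ← TensorProduct.smul_tmul', smul_smul, hεv0, hεv1, hεv2, hεw0, hεw1]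
    match_scalars <;> first | (ring1) | (linear_combination (-ρz*σε) * hε3)
  have keyg : (ρ.tprod (ρ.tprod σ)) g w'' = v 1 ⊗ₜ (v 0 ⊗ₜ w 1)
      - (ρz * σg2) • v 1 ⊗ₜ (v 0 ⊗ₜ w 0)
      + σε • v 0 ⊗ₜ (v 2 ⊗ₜ w 1) - (ρz * σε ^ 2 * σg2) • v 0 ⊗ₜ (v 2 ⊗ₜ w 0)
      + σε ^ 2 • v 2 ⊗ₜ (v 1 ⊗ₜ w 1) - (ρz * σε * σg2) • v 2 ⊗ₜ (v 1 ⊗ₜ w 0) := by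
    rw [key]
    simp only [pow_two, map_mul, Representation.tprod_apply, Module.End.mul_apply,
      TensorProduct.map_tmul, map_sub, map_add, map_smul, tmul_sub, sub_tmul, tmul_smul,
      ← TensorProduct.smul_tmul', smul_smul, hgv0, hgv1, hgv2, hgw0, hgw1]
    match_scalars <;> ring1
  have hr1 : b.repr w'' (2, 0, 0) = 1 := by
    rw [key]
    simp only [hb, map_add, map_sub, map_smul, Finsupp.add_apply, Finsupp.sub_apply,
      Finsupp.smul_apply, Module.Basis.tensorProduct_repr_tmul_apply, Module.Basis.repr_self, smul_eq_mul]
    norm_num [Finsupp.single_apply, Fin.ext_iff]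
  have hr2 : b.repr w'' (1, 0, 1) = 0 := by
    rw [key]
    simp only [hb, map_add, map_sub, map_smul, Finsupp.add_apply, Finsupp.sub_apply,
      Finsupp.smul_apply, Module.Basis.tensorProduct_repr_tmul_apply, Module.Basis.repr_self, smul_eq_mul]
    norm_num [Finsupp.single_apply, Fin.ext_iff]
  have hr3 : b.repr ((ρ.tprod (ρ.tprod σ)) g w'') (2, 0, 0) = 0 := by
    rw [keyg]
    simp only [hb, map_add, map_sub, map_smul, Finsupp.add_apply, Finsupp.sub_apply,
      Finsupp.smul_apply, Module.Basis.tensorProduct_repr_tmul_apply, Module.Basis.repr_self, smul_eq_mul]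
    norm_num [Finsupp.single_apply, Fin.ext_iff]
  have hr4 : b.repr ((ρ.tprod (ρ.tprod σ)) g w'') (1, 0, 1) = 1 := by
    rw [keyg]
    simp only [hb, map_add, map_sub, map_smul, Finsupp.add_apply, Finsupp.sub_apply,
      Finsupp.smul_apply, Module.Basis.tensorProduct_repr_tmul_apply, Module.Basis.repr_self, smul_eq_mul]
    norm_num [Finsupp.single_apply, Fin.ext_iff]
  refine ⟨?_, ?_, ?_, ?_, ?_⟩
  · intro h
    rw [h] at hr1
    simp at hr1
  · rw [LinearIndependent.pair_iff]
    intro s t hst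
    have h1 := congrArg (fun x => b.repr x (2, 0, 0)) hst
    have h2 := congrArg (fun x => b.repr x (1, 0, 1)) hst
    simp only [map_add, map_smul, Finsupp.add_apply, Finsupp.smul_apply, map_zero,
      Finsupp.zero_apply, hr1, hr2, hr3, hr4, smul_eq_mul, mul_one, mul_zero,
      add_zero, zero_add] at h1 h2
    exact ⟨h1, h2⟩
  · rw [key]
    simp only [pow_two, map_mul, Representation.tprod_apply, Module.End.mul_apply,
      TensorProduct.map_tmul, map_sub, map_add, map_smul, tmul_sub, sub_tmul, tmul_smul,
      ← TensorProduct.smul_tmul', smul_smul, hεv0, hεv1, hεv2, hεw0, hεw1]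
    match_scalars <;> first
      | (ring1)
      | (linear_combination hε3)
      | (linear_combination (-ρz*σε) * hε3)
      | (linear_combination (ρz*σε) * hε3)
      | (linear_combination σε * hε3)
      | (linear_combination (-σε) * hε3)
      | (linear_combination ρz * hε3)
      | (linear_combination (-ρz) * hε3)
  · have hinv : ρz⁻¹ ^ 2 = σg2 := by
      field_simp
      linear_combination -hcond2
    rw [pow_two, map_mul, Module.End.mul_apply, keyg, hinv, key]
    set_option maxHeartbeats 1000000 in
    simp only [pow_two, map_mul, Representation.tprod_apply, Module.End.mul_apply,
      TensorProduct.map_tmul, map_sub, map_add, map_smul, tmul_sub, sub_tmul, tmul_smul,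
      ← TensorProduct.smul_tmul', smul_smul, hgv0, hgv1, hgv2, hgw0, hgw1]
    set_option maxHeartbeats 1000000 in
    match_scalars <;> ring1
  · rw [key]
    set_option maxHeartbeats 1000000 in
    simp only [pow_two, map_mul, Representation.tprod_apply, Module.End.mul_apply,
      TensorProduct.map_tmul, map_sub, map_add, map_smul, tmul_sub, sub_tmul, tmul_smul,
      ← TensorProduct.smul_tmul', smul_smul, hzv, hzw0, hzw1]
    set_option maxHeartbeats 1000000 in
    match_scalars <;> ring1
end

section
/- Assume 1 + σ_ε + σ_ε² = 0, ρ_z² σ_{g²} = 1, ρ_g = −1 and σ_z ≠ −1. In W ⊗ V set v₁′ = (w₀ − ρ_z w₁)⊗v₀, and in W ⊗ (W ⊗ V) set v₁″ = (w₀ − ρ_z σ_z w₁)⊗v₁′. Then v₁″ ≠ 0, z·v₁″ = ρ_z σ_z² v₁″, and g·v₁″ lies in K·v₁″ if and only if σ_z² = 1; moreover if σ_z = 1 then g·v₁″ = −ρ_z⁻² v₁″. -/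
open TensorProduct

/-- Criterion for `(ad W)²(V)` to be simple for the second pair over a non-abelian
epimorphic image of `Γ₃`. -/
theorem second_pair_adW_sq_V_simple_criterion
    {K : Type*} [Field K] {G : Type*} [Group G]
    (g ε z : G) (hε : ε ≠ 1)
    (hgen : Subgroup.closure {g, ε, z} = ⊤)
    (hrel1 : g * ε * g⁻¹ = ε ^ 2) (hrel2 : ε ^ 3 = 1)
    (hrel3 : z * g = g * z) (hrel4 : z * ε = ε * z)
    {V : Type*} [AddCommGroup V] [Module K V]
    (ρ : Representation K G V) (v : Module.Basis (Fin 3) K V)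
    (ρg ρz : K) (hρg : ρg ≠ 0) (hρz : ρz ≠ 0)
    (hεv0 : ρ ε (v 0) = v 1) (hεv1 : ρ ε (v 1) = v 2) (hεv2 : ρ ε (v 2) = v 0)
    (hzv : ∀ i, ρ z (v i) = ρz • v i)
    (hgv0 : ρ g (v 0) = ρg • v 0) (hgv1 : ρ g (v 1) = ρg • v 2)
    (hgv2 : ρ g (v 2) = ρg • v 1)
    {W : Type*} [AddCommGroup W] [Module K W]
    (σ : Representation K G W) (w : Module.Basis (Fin 2) K W)
    (σε σz σg2 : K) (hσε : σε ≠ 0) (hσz : σz ≠ 0) (hσg2 : σg2 ≠ 0)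
    (hεw0 : σ ε (w 0) = σε • w 0) (hεw1 : σ ε (w 1) = σε ^ 2 • w 1)
    (hzw0 : σ z (w 0) = σz • w 0) (hzw1 : σ z (w 1) = σz • w 1)
    (hgw0 : σ g (w 0) = w 1) (hgw1 : σ g (w 1) = σg2 • w 0)
    (hcond1 : 1 + σε + σε ^ 2 = 0) (hcond2 : ρz ^ 2 * σg2 = 1)
    (hcond3 : ρg = -1) (hcond4 : σz ≠ -1) :
    ∀ (v1' : W ⊗[K] V) (v1'' : W ⊗[K] (W ⊗[K] V)),
      v1' = (w 0 - ρz • w 1) ⊗ₜ[K] v 0 →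
      v1'' = (w 0 - (ρz * σz) • w 1) ⊗ₜ[K] v1' →
      v1'' ≠ 0 ∧
      (σ.tprod (σ.tprod ρ)) z v1'' = (ρz * σz ^ 2) • v1'' ∧
      ((σ.tprod (σ.tprod ρ)) g v1'' ∈
          Submodule.span K ({v1''} : Set (W ⊗[K] (W ⊗[K] V))) ↔ σz ^ 2 = 1) ∧
      (σz = 1 → (σ.tprod (σ.tprod ρ)) g v1'' = (-(ρz⁻¹ ^ 2)) • v1'') := by
  intro v1' v1'' h1 h2
  subst h1 h2
  subst hcond3
  have hgv0' : ρ g (v 0) = (-1 : K) • v 0 := hgv0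
  set B := w.tensorProduct (w.tensorProduct v) with hB
  -- the key equality, valid whenever σz ^ 2 = 1
  have key : ∀ _ : σz ^ 2 = 1,
      (-(σz * σg2)) • ((w 0 - (ρz * σz) • w 1) ⊗ₜ[K] ((w 0 - ρz • w 1) ⊗ₜ[K] v 0))
        = (σ.tprod (σ.tprod ρ)) g
            ((w 0 - (ρz * σz) • w 1) ⊗ₜ[K] ((w 0 - ρz • w 1) ⊗ₜ[K] v 0)) := by
    intro hσz2
    simp only [Representation.tprod_apply, TensorProduct.map_tmul, map_sub, map_smul,
      hgw0, hgw1, hgv0', sub_tmul, tmul_sub, tmul_smul, ← smul_tmul', smul_sub, smul_smul,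
      neg_smul, one_smul, smul_neg, tmul_neg, neg_tmul, neg_neg, sub_neg_eq_add]
    match_scalars <;>
      first
        | ring1
        | linear_combination (σz * σg2) * hcond2
        | linear_combination (ρz * σg2) * hσz2
        | linear_combination (-(ρz ^ 2 * σg2)) * hσz2 - hcond2
  refine ⟨?_, ?_, ?_, ?_⟩
  · intro h0
    have hco : B.repr ((w 0 - (ρz * σz) • w 1) ⊗ₜ[K] ((w 0 - ρz • w 1) ⊗ₜ[K] v 0))
        (0, (0, 0)) = 1 := by
      simp [hB, -Prod.mk_zero_zero, Module.Basis.tensorProduct_repr_tmul_apply, map_sub,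
        map_smul, Finsupp.single_apply]
    rw [h0] at hco
    simp at hco
  · simp only [Representation.tprod_apply, TensorProduct.map_tmul, map_sub, map_smul,
      hzw0, hzw1, hzv, sub_tmul, tmul_sub, tmul_smul, ← smul_tmul', smul_sub, smul_smul]
    module
  · rw [Submodule.mem_span_singleton]
    constructor
    · rintro ⟨c, hc⟩
      have e1 := congrArg (fun x => B.repr x (0, (0, 0))) hc
      have e2 := congrArg (fun x => B.repr x (1, (0, 0))) hc
      simp [hB, -Prod.mk_zero_zero, Representation.tprod_apply, TensorProduct.map_tmul,
        map_sub, map_smul, hgw0, hgw1, hgv0',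
        Module.Basis.tensorProduct_repr_tmul_apply, Finsupp.single_apply] at e1 e2
      subst e1
      have h3 : ρz * σg2 * σz ^ 2 = ρz * σg2 * 1 := by
        linear_combination e2 - (ρz * σz ^ 2 * σg2) * hcond2
      exact mul_left_cancel₀ (mul_ne_zero hρz hσg2) h3
    · intro hσz2
      exact ⟨-(σz * σg2), key hσz2⟩
  · intro hσz1
    subst hσz1
    have hg2 : -(ρz⁻¹ ^ 2) = -((1 : K) * σg2) := by
      field_simp
      linear_combination hcond2
    rw [hg2]
    exact (key (by norm_num)).symm
end

section
/- Assume 1 + σ_ε + σ_ε² = 0, ρ_z² σ_{g²} = 1, ρ_g = −1 and σ_z = 1. For n ≥ 1 set yₙ = (w₀ − ρ_z w₁)^{⊗n} ⊗ v₀ ∈ W^{⊗n} ⊗ V. Then for every n ≥ 1 one has yₙ ≠ 0, g·yₙ = (−1)^{n+1} ρ_z^{−n} yₙ and z·yₙ = ρ_z yₙ. -/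
open TensorProduct

universe u₁ u₂ u₃

/-- For the second pair over a non-abelian epimorphic image of `Γ₃`, with
`1 + σ_ε + σ_ε² = 0`, `ρ_z² σ_{g²} = 1`, `ρ_g = −1` and `σ_z = 1`, the vectors
`yₙ = (w₀ − ρ_z w₁)^{⊗n} ⊗ v₀ ∈ W^{⊗n} ⊗ V` satisfy, for all `n ≥ 1`: `yₙ ≠ 0`,
`g·yₙ = (−1)^{n+1} ρ_z^{−n} yₙ` and `z·yₙ = ρ_z yₙ`. -/
theorem second_pair_adW_pow_V
    {K : Type u₁} [Field K] {G : Type u₂} [Group G]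
    (g ε z : G) (hε : ε ≠ 1)
    (hgen : Subgroup.closure {g, ε, z} = ⊤)
    (hrel1 : g * ε * g⁻¹ = ε ^ 2) (hrel2 : ε ^ 3 = 1)
    (hrel3 : z * g = g * z) (hrel4 : z * ε = ε * z)
    {V : Type u₃} [AddCommGroup V] [Module K V]
    (ρ : Representation K G V) (v : Module.Basis (Fin 3) K V)
    (ρg ρz : K) (hρg : ρg ≠ 0) (hρz : ρz ≠ 0)
    (hεv0 : ρ ε (v 0) = v 1) (hεv1 : ρ ε (v 1) = v 2) (hεv2 : ρ ε (v 2) = v 0)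
    (hzv : ∀ i, ρ z (v i) = ρz • v i)
    (hgv0 : ρ g (v 0) = ρg • v 0) (hgv1 : ρ g (v 1) = ρg • v 2)
    (hgv2 : ρ g (v 2) = ρg • v 1)
    {W : Type u₃} [AddCommGroup W] [Module K W]
    (σ : Representation K G W) (w : Module.Basis (Fin 2) K W)
    (σε σz σg2 : K) (hσε : σε ≠ 0) (hσz : σz ≠ 0) (hσg2 : σg2 ≠ 0)
    (hεw0 : σ ε (w 0) = σε • w 0) (hεw1 : σ ε (w 1) = σε ^ 2 • w 1)
    (hzw0 : σ z (w 0) = σz • w 0) (hzw1 : σ z (w 1) = σz • w 1)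
    (hgw0 : σ g (w 0) = w 1) (hgw1 : σ g (w 1) = σg2 • w 0)
    (hcond1 : 1 + σε + σε ^ 2 = 0) (hcond2 : ρz ^ 2 * σg2 = 1)
    (hcond3 : ρg = -1) (hcond4 : σz = 1)
    (y : (n : ℕ) → (GRep.powTensor (GRep.mk W σ) (GRep.mk V ρ) n).carrier)
    (hy0 : y 0 = v 0)
    (hyrec : ∀ n : ℕ, y (n + 1) = (w 0 - ρz • w 1) ⊗ₜ[K] y n) :
    ∀ n : ℕ, 1 ≤ n →
      y n ≠ 0 ∧
      (GRep.powTensor (GRep.mk W σ) (GRep.mk V ρ) n).rep g (y n) =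
        ((-1 : K) ^ (n + 1) * ρz⁻¹ ^ n) • y n ∧
      (GRep.powTensor (GRep.mk W σ) (GRep.mk V ρ) n).rep z (y n) = ρz • y n := by
  classical
  have hinv : ρz * σg2 = ρz⁻¹ := by
    field_simp
    linear_combination hcond2
  have hgu : σ g (w 0 - ρz • w 1) = (-ρz⁻¹) • (w 0 - ρz • w 1) := by
    rw [map_sub, map_smul, hgw0, hgw1, smul_smul, hinv, smul_sub, smul_smul, neg_mul,
      inv_mul_cancel₀ hρz]
    module
  have hzu : σ z (w 0 - ρz • w 1) = w 0 - ρz • w 1 := by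
    rw [map_sub, map_smul, hzw0, hzw1, hcond4, one_smul, one_smul]
  have main : ∀ n : ℕ,
      (∃ f : (GRep.powTensor (GRep.mk W σ) (GRep.mk V ρ) n).carrier →ₗ[K] K, f (y n) = 1) ∧
      (GRep.powTensor (GRep.mk W σ) (GRep.mk V ρ) n).rep g (y n) =
        ((-1 : K) ^ (n + 1) * ρz⁻¹ ^ n) • y n ∧
      (GRep.powTensor (GRep.mk W σ) (GRep.mk V ρ) n).rep z (y n) = ρz • y n := by
    intro n
    induction n with
    | zero =>
      simp only [GRep.powTensor]
      refine ⟨⟨v.coord 0, ?_⟩, ?_, ?_⟩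
      · erw [hy0, Module.Basis.coord_apply, Module.Basis.repr_self, Finsupp.single_eq_same]
      · erw [hy0, hgv0, hcond3]
        norm_num
        exact (neg_one_smul K (v 0)).symm
      · erw [hy0, hzv]
        rfl
    | succ n ih =>
      obtain ⟨⟨f, hf⟩, hgy, hzy⟩ := ih
      simp only [GRep.powTensor, GRep.tprod] at *
      have hcoord : (w.coord 0) (w 0 - ρz • w 1) = 1 := by
        rw [map_sub, map_smul, Module.Basis.coord_apply, Module.Basis.coord_apply, Module.Basis.repr_self,
          Module.Basis.repr_self]
        simp
      refine ⟨⟨(LinearMap.mul' K K).comp (TensorProduct.map (w.coord 0) f), ?_⟩, ?_, ?_⟩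
      · show (LinearMap.mul' K K) (TensorProduct.map (w.coord 0) f (y (n + 1))) = 1
        rw [hyrec, TensorProduct.map_tmul, hcoord, hf,
          LinearMap.mul'_apply, one_mul]
      · show TensorProduct.map (σ g) ((GRep.powTensor (GRep.mk W σ) (GRep.mk V ρ) n).rep g) (y (n + 1)) =
          ((-1 : K) ^ (n + 1 + 1) * ρz⁻¹ ^ (n + 1)) • (y (n + 1) : W ⊗[K] (GRep.powTensor (GRep.mk W σ) (GRep.mk V ρ) n).carrier)
        rw [hyrec, TensorProduct.map_tmul, hgu, hgy,
          TensorProduct.smul_tmul_smul]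
        congr 1
        ring
      · show TensorProduct.map (σ z) ((GRep.powTensor (GRep.mk W σ) (GRep.mk V ρ) n).rep z) (y (n + 1)) =
          ρz • (y (n + 1) : W ⊗[K] (GRep.powTensor (GRep.mk W σ) (GRep.mk V ρ) n).carrier)
        rw [hyrec, TensorProduct.map_tmul, hzu, hzy,
          TensorProduct.tmul_smul]
        rfl
  intro n hn
  obtain ⟨⟨f, hf⟩, hgy, hzy⟩ := main n
  exact ⟨fun h => by simp [h] at hf, hgy, hzy⟩
end

section
/- Assume ρ_z σ_g ≠ 1, and in V ⊗ V ⊗ W set w″ = v₂⊗v₀⊗w − ρ_g² ρ_z σ_g v₀⊗v₁⊗w + ρ_g(1 − ρ_z σ_g) v₁⊗v₂⊗w. Then w″ ≠ 0, z·w″ = ρ_z² σ_z w″, g²·w″ = ρ_g⁴ σ_g² w″, and: (a) if ρ_g = −1, then ε·w″ lies in K·w″ if and only if 1 − ρ_z σ_g + (ρ_z σ_g)² = 0, in which case ε·w″ = (ρ_z σ_g − 1) w″; (b) if ρ_g ρ_z σ_g = 1 and 1 − ρ_g + ρ_g² = 0, then ε·w″ = ρ_g(1 − ρ_z σ_g)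 w″. (This is the criterion for (ad V)²(W) to be absolutely simple for the third pair.) -/
open TensorProduct

/-- Criterion for `(ad V)²(W)` to be absolutely simple for the third pair over a
non-abelian epimorphic image of `Γ₃`. -/
theorem third_pair_adV_sq_W_simple_criterion
    {K : Type*} [Field K] {G : Type*} [Group G]
    (g ε z : G) (hε : ε ≠ 1)
    (hgen : Subgroup.closure {g, ε, z} = ⊤)
    (hrel1 : g * ε * g⁻¹ = ε ^ 2) (hrel2 : ε ^ 3 = 1)
    (hrel3 : z * g = g * z) (hrel4 : z * ε = ε * z)
    {V : Type*} [AddCommGroup V] [Module K V]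
    (ρ : Representation K G V) (v : Module.Basis (Fin 3) K V)
    (ρg ρz : K) (hρg : ρg ≠ 0) (hρz : ρz ≠ 0)
    (hεv0 : ρ ε (v 0) = v 1) (hεv1 : ρ ε (v 1) = v 2) (hεv2 : ρ ε (v 2) = v 0)
    (hzv : ∀ i, ρ z (v i) = ρz • v i)
    (hgv0 : ρ g (v 0) = ρg • v 0) (hgv1 : ρ g (v 1) = ρg • v 2)
    (hgv2 : ρ g (v 2) = ρg • v 1)
    {W : Type*} [AddCommGroup W] [Module K W]
    (σ : Representation K G W) (w : W) (hw : w ≠ 0)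
    (hspan : Submodule.span K ({w} : Set W) = ⊤)
    (σg σz : K) (hσg : σg ≠ 0) (hσz : σz ≠ 0)
    (hgw : σ g w = σg • w) (hεw : σ ε w = w) (hzw : σ z w = σz • w)
    (hcond : ρz * σg ≠ 1) :
    ∀ w'' : V ⊗[K] (V ⊗[K] W),
      w'' = v 2 ⊗ₜ[K] (v 0 ⊗ₜ[K] w) -
          (ρg ^ 2 * ρz * σg) • (v 0 ⊗ₜ[K] (v 1 ⊗ₜ[K] w)) +
          (ρg * (1 - ρz * σg)) • (v 1 ⊗ₜ[K] (v 2 ⊗ₜ[K] w)) →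
      w'' ≠ 0 ∧
      (ρ.tprod (ρ.tprod σ)) z w'' = (ρz ^ 2 * σz) • w'' ∧
      (ρ.tprod (ρ.tprod σ)) (g ^ 2) w'' = (ρg ^ 4 * σg ^ 2) • w'' ∧
      (ρg = -1 →
        ((ρ.tprod (ρ.tprod σ)) ε w'' ∈
            Submodule.span K ({w''} : Set (V ⊗[K] (V ⊗[K] W))) ↔
          1 - ρz * σg + (ρz * σg) ^ 2 = 0) ∧
        (1 - ρz * σg + (ρz * σg) ^ 2 = 0 →
          (ρ.tprod (ρ.tprod σ)) ε w'' = (ρz * σg - 1) • w'')) ∧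
      (ρg * ρz * σg = 1 → 1 - ρg + ρg ^ 2 = 0 →
        (ρ.tprod (ρ.tprod σ)) ε w'' = (ρg * (1 - ρz * σg)) • w'') := by
  have hli : LinearIndependent K (fun _ : Unit => w) := linearIndependent_unique_iff.mpr hw
  let bW : Module.Basis Unit K W := Module.Basis.mk hli (by rw [Set.range_const, hspan])
  let B : Module.Basis (Fin 3 × Fin 3 × Unit) K (V ⊗[K] (V ⊗[K] W)) :=
    v.tensorProduct (v.tensorProduct bW)
  have hBt : ∀ i j : Fin 3, B (i, j, ()) = v i ⊗ₜ[K] (v j ⊗ₜ[K] w) := by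
    intro i j
    simp [B, Module.Basis.tensorProduct_apply, bW, Module.Basis.mk_apply]
  intro w'' hw''
  set c : K := ρg ^ 2 * ρz * σg with hc
  set d : K := ρg * (1 - ρz * σg) with hd
  have hw''' : w'' = (1 : K) • B (2,0,()) + (-c) • B (0,1,()) + d • B (1,2,()) := by
    rw [hw'', hBt, hBt, hBt]; module
  have hne : w'' ≠ 0 := by
    intro h0
    have h1 := congrArg (fun x => B.repr x ((2 : Fin 3), (0 : Fin 3), ())) (hw'''.symm.trans h0)
    simp only [map_add, map_smul, B.repr_self, map_zero] at h1
    simp [Finsupp.single_apply] at h1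
  have hεact : (ρ.tprod (ρ.tprod σ)) ε w''
      = d • B (2,0,()) + (1 : K) • B (0,1,()) + (-c) • B (1,2,()) := by
    rw [hw'', hBt, hBt, hBt]
    simp only [Representation.tprod_apply, map_sub, map_add, map_smul,
      TensorProduct.map_tmul, hεv0, hεv1, hεv2, hεw]
    module
  refine ⟨hne, ?_, ?_, ?_, ?_⟩
  · -- z action
    rw [hw'']
    simp only [Representation.tprod_apply, map_sub, map_add, map_smul,
      TensorProduct.map_tmul, hzv, hzw, ← TensorProduct.smul_tmul',
      TensorProduct.tmul_smul, smul_smul]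
    match_scalars <;> ring
  · -- g² action
    have hg2 : (ρ.tprod (ρ.tprod σ)) (g ^ 2) w''
        = (ρ.tprod (ρ.tprod σ)) g ((ρ.tprod (ρ.tprod σ)) g w'') := by
      rw [map_pow, pow_two, Module.End.mul_apply]
    rw [hg2, hw'']
    simp only [Representation.tprod_apply, map_sub, map_add, map_smul,
      TensorProduct.map_tmul, hgv0, hgv1, hgv2, hgw, ← TensorProduct.smul_tmul',
      TensorProduct.tmul_smul, smul_smul]
    match_scalars <;> ring
  · -- part (a)
    intro hρgneg
    constructor
    · constructor
      · intro hmem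
        rw [Submodule.mem_span_singleton] at hmem
        obtain ⟨t, ht⟩ := hmem
        rw [hεact, hw'''] at ht
        rw [smul_add, smul_add, smul_smul, smul_smul, smul_smul] at ht
        have h1 := congrArg (fun x => B.repr x ((2 : Fin 3), (0 : Fin 3), ())) ht
        have h2 := congrArg (fun x => B.repr x ((0 : Fin 3), (1 : Fin 3), ())) ht
        simp only [map_add, map_smul, B.repr_self] at h1 h2
        simp [Finsupp.single_apply] at h1 h2
        simp only [hc, hd, hρgneg] at h1 h2
        linear_combination (-(ρz * σg)) * h1 - h2
      · intro hq
        rw [Submodule.mem_span_singleton]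
        refine ⟨ρz * σg - 1, ?_⟩
        rw [hεact, hw''']
        match_scalars <;> simp only [hc, hd, hρgneg] <;>
          first
            | ring1
            | linear_combination hq
            | linear_combination -hq
    · intro hq
      rw [hεact, hw''']
      match_scalars <;> simp only [hc, hd, hρgneg] <;>
        first
          | ring1
          | linear_combination hq
          | linear_combination -hq
  · -- part (b)
    intro h1 h2
    rw [hεact, hw''']
    match_scalars <;> simp only [hc, hd] <;>
      first
        | ring1
        | linear_combination (ρg ^ 2 - ρg * (ρg * ρz * σg + 1)) * h1 + h2
        | linear_combination (ρg * ρz * σg + 1 - ρg) * h1 + h2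
        | linear_combination (ρg * (ρg * ρz * σg + 1) - ρg ^ 2) * h1 - h2
        | linear_combination (ρg - 1 - ρg * ρz * σg) * h1 - h2
end

section
/- Assume char K ≠ 3, ρ_g ρ_z σ_g = 1 and 1 − ρ_g + ρ_g² = 0 (so in particular ρ_z σ_g = ρ_g⁻¹ ≠ 1). In V ⊗ V ⊗ W set w″ = v₂⊗v₀⊗w − ρ_g² ρ_z σ_g v₀⊗v₁⊗w + ρ_g(1 − ρ_z σ_g) v₁⊗v₂⊗w, and in V ⊗ (V ⊗ V ⊗ W) set w‴ = v₂⊗w″ + ρ_g² ρ_z v₁⊗(g·w″). Then w‴ ≠ 0, g·w‴ = σ_g w‴ and z·w‴ = ρ_z³ σ_z w‴. -/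
open TensorProduct

/-- For the third pair over a non-abelian epimorphic image of `Γ₃`, with `char K ≠ 3`,
`ρ_g ρ_z σ_g = 1` and `1 − ρ_g + ρ_g² = 0`, the vector
`w‴ = v₂⊗w″ + ρ_g² ρ_z v₁⊗(g·w″)` is non-zero and `g·w‴ = σ_g w‴`,
`z·w‴ = ρ_z³ σ_z w‴`. -/
theorem third_pair_adV_cube_W
    {K : Type*} [Field K] {G : Type*} [Group G]
    (g ε z : G) (hε : ε ≠ 1)
    (hgen : Subgroup.closure {g, ε, z} = ⊤)
    (hrel1 : g * ε * g⁻¹ = ε ^ 2) (hrel2 : ε ^ 3 = 1)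
    (hrel3 : z * g = g * z) (hrel4 : z * ε = ε * z)
    {V : Type*} [AddCommGroup V] [Module K V]
    (ρ : Representation K G V) (v : Module.Basis (Fin 3) K V)
    (ρg ρz : K) (hρg : ρg ≠ 0) (hρz : ρz ≠ 0)
    (hεv0 : ρ ε (v 0) = v 1) (hεv1 : ρ ε (v 1) = v 2) (hεv2 : ρ ε (v 2) = v 0)
    (hzv : ∀ i, ρ z (v i) = ρz • v i)
    (hgv0 : ρ g (v 0) = ρg • v 0) (hgv1 : ρ g (v 1) = ρg • v 2)
    (hgv2 : ρ g (v 2) = ρg • v 1)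
    {W : Type*} [AddCommGroup W] [Module K W]
    (σ : Representation K G W) (w : W) (hw : w ≠ 0)
    (hspan : Submodule.span K ({w} : Set W) = ⊤)
    (σg σz : K) (hσg : σg ≠ 0) (hσz : σz ≠ 0)
    (hgw : σ g w = σg • w) (hεw : σ ε w = w) (hzw : σ z w = σz • w)
    (hchar : ringChar K ≠ 3)
    (hcond1 : ρg * ρz * σg = 1) (hcond2 : 1 - ρg + ρg ^ 2 = 0) :
    ∀ (w'' : V ⊗[K] (V ⊗[K] W)) (w''' : V ⊗[K] (V ⊗[K] (V ⊗[K] W))),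
      w'' = v 2 ⊗ₜ[K] (v 0 ⊗ₜ[K] w) -
          (ρg ^ 2 * ρz * σg) • (v 0 ⊗ₜ[K] (v 1 ⊗ₜ[K] w)) +
          (ρg * (1 - ρz * σg)) • (v 1 ⊗ₜ[K] (v 2 ⊗ₜ[K] w)) →
      w''' = v 2 ⊗ₜ[K] w'' +
          (ρg ^ 2 * ρz) • (v 1 ⊗ₜ[K] ((ρ.tprod (ρ.tprod σ)) g w'')) →
      w''' ≠ 0 ∧
      (ρ.tprod (ρ.tprod (ρ.tprod σ))) g w''' = σg • w''' ∧
      (ρ.tprod (ρ.tprod (ρ.tprod σ))) z w''' = (ρz ^ 3 * σz) • w''' := by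
  intro w'' w''' h1 h2
  subst h1 h2
  simp only [Representation.tprod_apply, map_add, map_sub, map_smul, TensorProduct.map_tmul,
    hgv0, hgv1, hgv2, hgw, hzv, hzw, hεv0, hεv1, hεv2, hεw,
    TensorProduct.smul_tmul, TensorProduct.tmul_smul, TensorProduct.tmul_sub,
    TensorProduct.tmul_add, smul_smul, smul_sub, smul_add]
  refine ⟨?_, ?_, ?_⟩
  · have hw1 : LinearIndependent K (fun _ : Fin 1 => w) := linearIndependent_unique_iff.2 hw
    have hsp : ⊤ ≤ Submodule.span K (Set.range fun _ : Fin 1 => w) := by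
      rw [Set.range_const, hspan]
    set bW : Module.Basis (Fin 1) K W := Module.Basis.mk hw1 hsp with hbWdef
    have hbW : bW.repr w = Finsupp.single 0 1 := by
      have h0 : bW 0 = w := Module.Basis.mk_apply hw1 hsp 0
      rw [← h0, Module.Basis.repr_self]
    intro h0
    have h := congrArg (fun u =>
      (v.tensorProduct (v.tensorProduct (v.tensorProduct bW))).repr u
        ((2 : Fin 3), ((2 : Fin 3), ((0 : Fin 3), (0 : Fin 1))))) h0
    simp only [map_add, map_sub, map_smul, Module.Basis.tensorProduct_repr_tmul_apply,
      Finsupp.add_apply, Finsupp.sub_apply, Finsupp.smul_apply, hbW, Module.Basis.repr_self,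
      Finsupp.single_apply, map_zero, Finsupp.zero_apply] at h
    norm_num [show ((1:Fin 3) = 2) = False by simp [Fin.ext_iff], show ((2:Fin 3) = 0) = False by simp [Fin.ext_iff]] at h
  · match_scalars
    · linear_combination ((-1)*ρg^4*σg + ρg^5*σg) * hcond1 + (ρg^3*σg + (-1)*ρg^4*ρz*σg^2) * hcond2
    · linear_combination ((-1)*ρg^5*σg + (2)*ρg^6*σg + ρg^6*ρz*σg^2 + (-2)*ρg^7*σg + (-1)*ρg^7*ρz*σg^2 + ρg^8*σg) * hcond1 + ((-1)*ρg^5*σg + (-1)*ρg^5*ρz*σg^2 + ρg^6*σg + ρg^6*ρz*σg^2 + ρg^6*ρz^2*σg^3 + (-1)*ρg^7*ρz*σg^2) * hcond2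
    · linear_combination ((-1)*ρg^4*σg + ρg^5*σg + ρg^5*ρz*σg^2 + (-1)*ρg^6*σg + (-1)*ρg^6*ρz*σg^2 + ρg^7*σg) * hcond1 + ((-1)*ρg^4*ρz*σg^2 + ρg^5*σg + ρg^5*ρz^2*σg^3 + (-1)*ρg^6*ρz*σg^2) * hcond2
    · linear_combination (ρg^7*σg + (-1)*ρg^8*σg) * hcond1 + ((-1)*σg + (-1)*ρg*σg + ρg^3*σg + ρg^4*σg + (-1)*ρg^6*σg + ρg^7*ρz*σg^2) * hcond2
    · linear_combination (ρg^2*σg + (-1)*ρg^3*σg + (-1)*ρg^9*σg + (-1)*ρg^9*ρz*σg^2 + (2)*ρg^10*σg + ρg^10*ρz*σg^2 + (-1)*ρg^11*σg) * hcond1 + (ρg^2*σg + ρg^2*ρz*σg^2 + (-1)*ρg^4*σg + (-1)*ρg^5*σg + ρg^7*σg + ρg^8*σg + (-1)*ρg^9*σg + (-1)*ρg^9*ρz*σg^2 + (-1)*ρg^9*ρz^2*σg^3 + ρg^10*ρz*σg^2) * hcond2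
    · linear_combination (ρg*σg + (-1)*ρg^2*σg + (-1)*ρg^8*ρz*σg^2 + ρg^9*σg + ρg^9*ρz*σg^2 + (-1)*ρg^10*σg) * hcond1 + (ρg*ρz*σg^2 + (-1)*ρg^2*σg + (-1)*ρg^3*σg + ρg^5*σg + ρg^6*σg + (-1)*ρg^8*σg + (-1)*ρg^8*ρz^2*σg^3 + ρg^9*ρz*σg^2) * hcond2
  · match_scalars <;> ring
end

section
/- Assume char K = 2, ρ_g ρ_z σ_g = 1 and 1 + ρ_g + ρ_g² = 0. In V ⊗ V ⊗ W set w″ = v₂⊗v₀⊗w − ρ_g² ρ_z σ_g v₀⊗v₁⊗w + ρ_g(1 − ρ_z σ_g) v₁⊗v₂⊗w, then w‴ = v₂⊗w″ + ρ_g² ρ_z v₁⊗(g·w″) in V ⊗ (V ⊗ V ⊗ W), and finally w⁗ = v₀⊗w‴ + v₁⊗(ε·w‴) + v₂⊗(ε²·w‴) in V ⊗ (V ⊗ V ⊗ V ⊗ W). Then w⁗ ≠ 0, ε·w⁗ = w⁗, g·w⁗ = ρ_g σ_g w⁗ and z·w⁗ = ρ_z⁴ σ_z w⁗. -/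
open TensorProduct

noncomputable def auxCoord {K V M : Type*} [Field K] [AddCommGroup V] [Module K V]
    [AddCommMonoid M] [Module K M] (v : Module.Basis (Fin 3) K V) (i : Fin 3) :
    V ⊗[K] M →ₗ[K] M :=
  (TensorProduct.lid K M).toLinearMap ∘ₗ LinearMap.rTensor M (v.coord i)

@[simp] lemma auxCoord_tmul {K V M : Type*} [Field K] [AddCommGroup V] [Module K V]
    [AddCommMonoid M] [Module K M] (v : Module.Basis (Fin 3) K V) (i j : Fin 3) (m : M) :
    auxCoord v i (v j ⊗ₜ[K] m) = if j = i then m else 0 := by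
  simp [auxCoord, Module.Basis.coord_apply, Module.Basis.repr_self, Finsupp.single_apply, ite_smul]

lemma auxTprodTmul {k G V W : Type*} [CommSemiring k] [Monoid G] [AddCommMonoid V]
    [Module k V] [AddCommMonoid W] [Module k W] (ρV : Representation k G V)
    (ρW : Representation k G W) (γ : G) (x : V) (y : W) :
    (ρV.tprod ρW) γ (x ⊗ₜ[k] y) = ρV γ x ⊗ₜ[k] ρW γ y := rfl


open TensorProduct

/-- For the third pair over a non-abelian epimorphic image of `Γ₃`, with `char K = 2`,
`ρ_g ρ_z σ_g = 1` and `1 + ρ_g + ρ_g² = 0`, the vector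
`w⁗ = v₀⊗w‴ + v₁⊗(ε·w‴) + v₂⊗(ε²·w‴)` is non-zero, `ε·w⁗ = w⁗`,
`g·w⁗ = ρ_g σ_g w⁗` and `z·w⁗ = ρ_z⁴ σ_z w⁗`. -/
theorem third_pair_adV_fourth_W
    {K : Type*} [Field K] {G : Type*} [Group G]
    (g ε z : G) (hε : ε ≠ 1)
    (hgen : Subgroup.closure {g, ε, z} = ⊤)
    (hrel1 : g * ε * g⁻¹ = ε ^ 2) (hrel2 : ε ^ 3 = 1)
    (hrel3 : z * g = g * z) (hrel4 : z * ε = ε * z)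
    {V : Type*} [AddCommGroup V] [Module K V]
    (ρ : Representation K G V) (v : Module.Basis (Fin 3) K V)
    (ρg ρz : K) (hρg : ρg ≠ 0) (hρz : ρz ≠ 0)
    (hεv0 : ρ ε (v 0) = v 1) (hεv1 : ρ ε (v 1) = v 2) (hεv2 : ρ ε (v 2) = v 0)
    (hzv : ∀ i, ρ z (v i) = ρz • v i)
    (hgv0 : ρ g (v 0) = ρg • v 0) (hgv1 : ρ g (v 1) = ρg • v 2)
    (hgv2 : ρ g (v 2) = ρg • v 1)
    {W : Type*} [AddCommGroup W] [Module K W]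
    (σ : Representation K G W) (w : W) (hw : w ≠ 0)
    (hspan : Submodule.span K ({w} : Set W) = ⊤)
    (σg σz : K) (hσg : σg ≠ 0) (hσz : σz ≠ 0)
    (hgw : σ g w = σg • w) (hεw : σ ε w = w) (hzw : σ z w = σz • w)
    (hchar : ringChar K = 2)
    (hcond1 : ρg * ρz * σg = 1) (hcond2 : 1 + ρg + ρg ^ 2 = 0) :
    ∀ (w'' : V ⊗[K] (V ⊗[K] W)) (w''' : V ⊗[K] (V ⊗[K] (V ⊗[K] W)))
      (w'''' : V ⊗[K] (V ⊗[K] (V ⊗[K] (V ⊗[K] W)))),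
      w'' = v 2 ⊗ₜ[K] (v 0 ⊗ₜ[K] w) -
          (ρg ^ 2 * ρz * σg) • (v 0 ⊗ₜ[K] (v 1 ⊗ₜ[K] w)) +
          (ρg * (1 - ρz * σg)) • (v 1 ⊗ₜ[K] (v 2 ⊗ₜ[K] w)) →
      w''' = v 2 ⊗ₜ[K] w'' +
          (ρg ^ 2 * ρz) • (v 1 ⊗ₜ[K] ((ρ.tprod (ρ.tprod σ)) g w'')) →
      w'''' = v 0 ⊗ₜ[K] w''' +
          v 1 ⊗ₜ[K] ((ρ.tprod (ρ.tprod (ρ.tprod σ))) ε w''') +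
          v 2 ⊗ₜ[K] ((ρ.tprod (ρ.tprod (ρ.tprod σ))) (ε ^ 2) w''') →
      w'''' ≠ 0 ∧
      (ρ.tprod (ρ.tprod (ρ.tprod (ρ.tprod σ)))) ε w'''' = w'''' ∧
      (ρ.tprod (ρ.tprod (ρ.tprod (ρ.tprod σ)))) g w'''' = (ρg * σg) • w'''' ∧
      (ρ.tprod (ρ.tprod (ρ.tprod (ρ.tprod σ)))) z w'''' = (ρz ^ 4 * σz) • w'''' := by
  intro w'' w''' w'''' hw2d hw3d hw4d
  have h2 : (2 : K) = 0 := by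
    haveI : CharP K 2 := hchar ▸ ringChar.charP K
    exact_mod_cast CharP.cast_eq_zero K 2
  have ha3 : ρg ^ 3 = 1 := by linear_combination (ρg - 1) * hcond2
  have hbs : ρz * σg = ρg ^ 2 := by
    linear_combination ρg ^ 2 * hcond1 - ρz * σg * ha3
  -- simplified form of w''
  have hw2 : w'' = v 2 ⊗ₜ[K] (v 0 ⊗ₜ[K] w) + ρg • (v 0 ⊗ₜ[K] (v 1 ⊗ₜ[K] w))
      + (ρg ^ 2) • (v 1 ⊗ₜ[K] (v 2 ⊗ₜ[K] w)) := by
    rw [hw2d]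
    match_scalars
    · ring
    · linear_combination -ρg ^ 2 * hbs - ρg * ha3 - ρg * h2
    · linear_combination -ρg * hbs - ha3 - hcond2 + ρg * h2
  -- explicit form of w'''
  have hw3 : w''' = v 2 ⊗ₜ[K] (v 2 ⊗ₜ[K] (v 0 ⊗ₜ[K] w))
      + ρg • (v 2 ⊗ₜ[K] (v 0 ⊗ₜ[K] (v 1 ⊗ₜ[K] w)))
      + (ρg ^ 2) • (v 2 ⊗ₜ[K] (v 1 ⊗ₜ[K] (v 2 ⊗ₜ[K] w)))
      + v 1 ⊗ₜ[K] (v 1 ⊗ₜ[K] (v 0 ⊗ₜ[K] w))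
      + ρg • (v 1 ⊗ₜ[K] (v 0 ⊗ₜ[K] (v 2 ⊗ₜ[K] w)))
      + (ρg ^ 2) • (v 1 ⊗ₜ[K] (v 2 ⊗ₜ[K] (v 1 ⊗ₜ[K] w))) := by
    rw [hw3d, hw2]
    simp only [map_add, map_smul, auxTprodTmul,
      hgv0, hgv1, hgv2, hgw, TensorProduct.tmul_smul, ← TensorProduct.smul_tmul', smul_smul,
      TensorProduct.tmul_add]
    match_scalars
    · ring
    · ring
    · ring
    · linear_combination ρg ^ 4 * hbs + (ρg ^ 3 + 1) * ha3
    · linear_combination ρg ^ 5 * hbs + (ρg ^ 4 + ρg) * ha3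
    · linear_combination ρg ^ 6 * hbs + (ρg ^ 5 + ρg ^ 2) * ha3
  -- eigenvector properties of w'''
  have hgw3 : (ρ.tprod (ρ.tprod (ρ.tprod σ))) g w''' = σg • w''' := by
    rw [hw3]
    simp only [map_add, map_smul, auxTprodTmul,
      hgv0, hgv1, hgv2, hgw, TensorProduct.tmul_smul, ← TensorProduct.smul_tmul', smul_smul,
      smul_add]
    match_scalars
    · linear_combination σg * ha3
    · linear_combination ρg * σg * ha3
    · linear_combination ρg ^ 2 * σg * ha3
    · linear_combination σg * ha3
    · linear_combination ρg * σg * ha3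
    · linear_combination ρg ^ 2 * σg * ha3
  have hzw3 : (ρ.tprod (ρ.tprod (ρ.tprod σ))) z w''' = (ρz ^ 3 * σz) • w''' := by
    rw [hw3]
    simp only [map_add, map_smul, auxTprodTmul,
      hzv, hzw, TensorProduct.tmul_smul, ← TensorProduct.smul_tmul', smul_smul, smul_add]
    match_scalars <;> ring
  -- group identities
  have hge : g * ε = ε ^ 2 * g := by rw [← hrel1]; group
  have hge2 : g * ε ^ 2 = ε * g := by
    have h4 : ε ^ 4 = ε := by
      rw [show (4 : ℕ) = 3 + 1 from rfl, pow_succ, hrel2, one_mul]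
    calc g * ε ^ 2 = g * ε * ε := by rw [pow_two, mul_assoc]
      _ = ε ^ 2 * g * ε := by rw [hge]
      _ = ε ^ 2 * (g * ε) := by rw [mul_assoc]
      _ = ε ^ 2 * (ε ^ 2 * g) := by rw [hge]
      _ = ε ^ 2 * ε ^ 2 * g := by rw [mul_assoc]
      _ = ε ^ 4 * g := by rw [← pow_add]
      _ = ε * g := by rw [h4]
  have hze2 : z * ε ^ 2 = ε ^ 2 * z := by
    rw [pow_two, ← mul_assoc, hrel4, mul_assoc, hrel4, mul_assoc]
  refine ⟨?_, ?_, ?_, ?_⟩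
  · -- nonzero
    intro h0
    have e4 : v 0 ⊗ₜ[K] w''' +
        v 1 ⊗ₜ[K] ((ρ.tprod (ρ.tprod (ρ.tprod σ))) ε w''') +
        v 2 ⊗ₜ[K] ((ρ.tprod (ρ.tprod (ρ.tprod σ))) (ε ^ 2) w''') = 0 := hw4d.symm.trans h0
    have h3 : w''' = 0 := by
      have h := e4
      apply_fun (auxCoord v 0) at h
      simpa using h
    have e3 : v 2 ⊗ₜ[K] w'' +
        (ρg ^ 2 * ρz) • (v 1 ⊗ₜ[K] ((ρ.tprod (ρ.tprod σ)) g w'')) = 0 := hw3d.symm.trans h3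
    have hww : w'' = 0 := by
      have h := e3
      apply_fun (auxCoord v 2) at h
      simpa using h
    have e2 : v 2 ⊗ₜ[K] (v 0 ⊗ₜ[K] w) + ρg • (v 0 ⊗ₜ[K] (v 1 ⊗ₜ[K] w))
        + (ρg ^ 2) • (v 1 ⊗ₜ[K] (v 2 ⊗ₜ[K] w)) = 0 := hw2.symm.trans hww
    have e1 : (v 0 : V) ⊗ₜ[K] w = 0 := by
      have h := e2
      apply_fun (auxCoord v 2) at h
      simpa using h
    have : w = 0 := by
      have h := e1
      apply_fun (auxCoord v 0) at h
      simpa using h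
    exact hw this
  · -- epsilon invariance
    rw [hw4d]
    simp only [map_add, auxTprodTmul,
      hεv0, hεv1, hεv2]
    rw [show (ρ.tprod (ρ.tprod (ρ.tprod σ))) ε ((ρ.tprod (ρ.tprod (ρ.tprod σ))) ε w''')
        = (ρ.tprod (ρ.tprod (ρ.tprod σ))) (ε ^ 2) w''' by
      rw [pow_two, map_mul, Module.End.mul_apply]]
    rw [show (ρ.tprod (ρ.tprod (ρ.tprod σ))) ε ((ρ.tprod (ρ.tprod (ρ.tprod σ))) (ε ^ 2) w''')
        = w''' by
      rw [← Module.End.mul_apply, ← map_mul, ← pow_succ', hrel2, map_one, Module.End.one_apply]]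
    abel
  · -- g action
    rw [hw4d]
    simp only [map_add, auxTprodTmul,
      hgv0, hgv1, hgv2, TensorProduct.tmul_smul, ← TensorProduct.smul_tmul']
    rw [show (ρ.tprod (ρ.tprod (ρ.tprod σ))) g ((ρ.tprod (ρ.tprod (ρ.tprod σ))) ε w''')
        = σg • (ρ.tprod (ρ.tprod (ρ.tprod σ))) (ε ^ 2) w''' by
      rw [← Module.End.mul_apply, ← map_mul, hge, map_mul, Module.End.mul_apply, hgw3, map_smul]]
    rw [show (ρ.tprod (ρ.tprod (ρ.tprod σ))) g ((ρ.tprod (ρ.tprod (ρ.tprod σ))) (ε ^ 2) w''')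
        = σg • (ρ.tprod (ρ.tprod (ρ.tprod σ))) ε w''' by
      rw [← Module.End.mul_apply, ← map_mul, hge2, map_mul, Module.End.mul_apply, hgw3, map_smul]]
    rw [hgw3]
    simp only [TensorProduct.tmul_smul, smul_add, smul_smul]
    module
  · -- z action
    rw [hw4d]
    simp only [map_add, auxTprodTmul,
      hzv, TensorProduct.tmul_smul, ← TensorProduct.smul_tmul']
    rw [show (ρ.tprod (ρ.tprod (ρ.tprod σ))) z ((ρ.tprod (ρ.tprod (ρ.tprod σ))) ε w''')
        = (ρz ^ 3 * σz) • (ρ.tprod (ρ.tprod (ρ.tprod σ))) ε w''' by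
      rw [← Module.End.mul_apply, ← map_mul, hrel4, map_mul, Module.End.mul_apply, hzw3, map_smul]]
    rw [show (ρ.tprod (ρ.tprod (ρ.tprod σ))) z ((ρ.tprod (ρ.tprod (ρ.tprod σ))) (ε ^ 2) w''')
        = (ρz ^ 3 * σz) • (ρ.tprod (ρ.tprod (ρ.tprod σ))) (ε ^ 2) w''' by
      rw [← Module.End.mul_apply, ← map_mul, hze2, map_mul, Module.End.mul_apply, hzw3, map_smul]]
    rw [hzw3]
    simp only [TensorProduct.tmul_smul, smul_add, smul_smul]
    module
end
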